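/- Let a ≥ b be positive integers and c a positive integer with gcd(a,c) = gcd(b,c) = 1, let Γ be the Z-grading of K[x,y,z] with deg x = a, deg y = b, deg z = −c, and let q̂ = max{q ∈ Z : bq ≡ a (mod c) and bq < a}. If q̂ ≥ 2, then there exists a Γ-graded automorphism of K[x,y,z] that is graded-wild, i.e., not a composition of Γ-graded elementary and Γ-graded linear automorphisms. -/

import Mathlib

open MvPolynomial

/-- An automorphism of `K[x,y,z]` is *elementary* if it sends one variable to itself plus
a polynomial in the other two variables and fixes the other variables. -/
def IsElementary {K : Type*} [CommRing K]
    (φ : MvPolynomial (Fin 3) K ≃ₐ[K] MvPolynomial (Fin 3) K) : Prop :=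
  ∃ (i : Fin 3) (F : MvPolynomial (Fin 3) K), i ∉ F.vars ∧
    φ (X i) = X i + F ∧ ∀ j : Fin 3, j ≠ i → φ (X j) = X j

/-- An automorphism of `K[x,y,z]` is *linear* if it sends each variable to a `K`-linear
combination of the variables. -/
def IsLinearAut {K : Type*} [CommRing K]
    (φ : MvPolynomial (Fin 3) K ≃ₐ[K] MvPolynomial (Fin 3) K) : Prop :=
  ∀ i : Fin 3, ∃ c : Fin 3 → K, φ (X i) = ∑ j : Fin 3, C (c j) * X j

/-- For the `ℤ`-grading of `K[x,y,z]` with weights `w`, an automorphism is *graded*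
if it maps each homogeneous component into itself. -/
def IsGraded {K : Type*} [CommRing K] (w : Fin 3 → ℤ)
    (φ : MvPolynomial (Fin 3) K ≃ₐ[K] MvPolynomial (Fin 3) K) : Prop :=
  ∀ (d : ℤ) (f : MvPolynomial (Fin 3) K),
    f.IsWeightedHomogeneous w d → (φ f).IsWeightedHomogeneous w d

/-- A graded automorphism is *graded-tame* if it is a composition of graded elementary
and graded linear automorphisms, and *graded-wild* otherwise. -/
def IsGradedTame {K : Type*} [CommRing K] (w : Fin 3 → ℤ)
    (φ : MvPolynomial (Fin 3) K ≃ₐ[K] MvPolynomial (Fin 3) K) : Prop :=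
  ∃ l : List (MvPolynomial (Fin 3) K ≃ₐ[K] MvPolynomial (Fin 3) K),
    (∀ ψ ∈ l, IsGraded w ψ ∧ (IsElementary ψ ∨ IsLinearAut ψ)) ∧ φ = l.prod

namespace GradedWild

variable {K : Type*} [Field K]

/-- x-degree of a polynomial in K[x,y,z], via the iso to (K[y,z])[x]. -/
noncomputable def D (f : MvPolynomial (Fin 3) K) : ℕ :=
  (MvPolynomial.finSuccEquiv K 2 f).natDegree

lemma D_zero : D (0 : MvPolynomial (Fin 3) K) = 0 := by simp [D]

lemma D_C (r : K) : D (C r : MvPolynomial (Fin 3) K) = 0 := by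
  simp [D, MvPolynomial.natDegree_finSuccEquiv]

lemma D_X0 : D (X 0 : MvPolynomial (Fin 3) K) = 1 := by
  simp [D, finSuccEquiv_X_zero]

lemma D_X1 : D (X 1 : MvPolynomial (Fin 3) K) = 0 := by
  rw [D, show (1 : Fin 3) = Fin.succ 0 from rfl, finSuccEquiv_X_succ]
  simp

lemma D_X2 : D (X 2 : MvPolynomial (Fin 3) K) = 0 := by
  rw [D, show (2 : Fin 3) = Fin.succ 1 from rfl, finSuccEquiv_X_succ]
  simp

lemma D_mul {f g : MvPolynomial (Fin 3) K} (hf : f ≠ 0) (hg : g ≠ 0) :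
    D (f * g) = D f + D g := by
  have hf' : (MvPolynomial.finSuccEquiv K 2 f) ≠ 0 := by
    simpa using (EmbeddingLike.map_ne_zero_iff (f := (MvPolynomial.finSuccEquiv K 2))).2 hf
  have hg' : (MvPolynomial.finSuccEquiv K 2 g) ≠ 0 := by
    simpa using (EmbeddingLike.map_ne_zero_iff (f := (MvPolynomial.finSuccEquiv K 2))).2 hg
  simp only [D, map_mul]
  exact Polynomial.natDegree_mul hf' hg'

lemma D_pow {f : MvPolynomial (Fin 3) K} (hf : f ≠ 0) (k : ℕ) : D (f ^ k) = k * D f := by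
  induction k with
  | zero => simp [D]
  | succ k ih =>
      rw [pow_succ, D_mul (pow_ne_zero _ hf) hf, ih]; ring

lemma D_neg (f : MvPolynomial (Fin 3) K) : D (-f) = D f := by
  simp [D, map_neg]

lemma D_smul (r : K) (f : MvPolynomial (Fin 3) K) (hr : r ≠ 0) : D (C r * f) = D f := by
  rcases eq_or_ne f 0 with rfl | hf
  · simp
  · rw [D_mul (by simpa using hr) hf, D_C, zero_add]

lemma D_add_right {f g : MvPolynomial (Fin 3) K} (h : D f < D g) :
    D (f + g) = D g ∧ f + g ≠ 0 := by
  have hg : g ≠ 0 := by rintro rfl; simp [D_zero] at h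
  constructor
  · simp only [D, map_add]
    exact Polynomial.natDegree_add_eq_right_of_natDegree_lt h
  · intro hfg
    have : f = -g := by linear_combination (norm := abel) hfg
    rw [this, D_neg] at h; omega

lemma D_add_left {f g : MvPolynomial (Fin 3) K} (h : D g < D f) :
    D (f + g) = D f ∧ f + g ≠ 0 := by
  rw [add_comm]; exact D_add_right h

/-- degree of a sum with a strictly dominating term. -/
lemma D_sum {ι : Type*} (s : Finset ι) (F : ι → MvPolynomial (Fin 3) K) (k₀ : ι)
    (hk₀ : k₀ ∈ s) (h0 : F k₀ ≠ 0)
    (hlt : ∀ k ∈ s, k ≠ k₀ → D (F k) < D (F k₀)) :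
    D (∑ k ∈ s, F k) = D (F k₀) ∧ (∑ k ∈ s, F k) ≠ 0 := by
  classical
  have : (∑ k ∈ s, F k) = F k₀ + ∑ k ∈ s.erase k₀, F k := by
    rw [add_comm, Finset.sum_erase_add _ _ hk₀]
  rw [this]
  rcases eq_or_ne (∑ k ∈ s.erase k₀, F k) 0 with hz | hz
  · rw [hz, add_zero]; exact ⟨rfl, h0⟩
  · have hD : D (∑ k ∈ s.erase k₀, F k) < D (F k₀) := by
      have hb : ∀ k ∈ s.erase k₀, (MvPolynomial.finSuccEquiv K 2 (F k)).natDegree ≤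
          D (F k₀) - 1 := by
        intro k hk
        have := hlt k (Finset.mem_of_mem_erase hk) (Finset.ne_of_mem_erase hk)
        simp only [D] at this ⊢; omega
      have hle : D (∑ k ∈ s.erase k₀, F k) ≤ D (F k₀) - 1 := by
        simpa [D, map_sum] using Polynomial.natDegree_sum_le_of_forall_le (s.erase k₀)
          (fun k => MvPolynomial.finSuccEquiv K 2 (F k)) hb
      have hpos : 0 < D (F k₀) := by
        rcases s.erase k₀ |>.eq_empty_or_nonempty with he | ⟨k, hk⟩
        · simp [he] at hz
        · have := hlt k (Finset.mem_of_mem_erase hk) (Finset.ne_of_mem_erase hk); omega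
      omega
    have := D_add_right (f := ∑ k ∈ s.erase k₀, F k) (g := F k₀) hD
    rw [add_comm] at this
    exact this


lemma mono_single (e : ℕ) (r : K) :
    (monomial (Finsupp.single 2 e) r : MvPolynomial (Fin 3) K) = C r * X 2 ^ e := by
  rw [X_pow_eq_monomial, C_mul_monomial, mul_one]

/-- Exact x-degree of the image of a polynomial `f` in the variables `X v, X 2` under an
algebra map sending `X v ↦ P` (of x-degree `n ≥ 1`) and `X 2 ↦ γ • X 2`. -/
lemma aeval_D (v o : Fin 3) (hvo : (v = 0 ∧ o = 1) ∨ (v = 1 ∧ o = 0))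
    (img : Fin 3 → MvPolynomial (Fin 3) K) (γ : K) (hγ : γ ≠ 0)
    (h2 : img 2 = C γ * X 2) (n : ℕ) (hn : 1 ≤ n) (hPD : D (img v) = n) (hPne : img v ≠ 0)
    (f : MvPolynomial (Fin 3) K) (hf : f ≠ 0) (ho : ∀ m ∈ f.support, m o = 0) :
    D (aeval img f) = n * degreeOf v f ∧ aeval img f ≠ 0 := by
  classical
  set P := img v with hP
  set d := degreeOf v f with hdd
  have hCX2 : (C γ * X 2 : MvPolynomial (Fin 3) K) ≠ 0 := by
    apply mul_ne_zero
    · simpa using hγ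
    · exact X_ne_zero 2
  have hDCX2 : D (C γ * X 2 : MvPolynomial (Fin 3) K) = 0 := by
    rw [D_smul _ _ hγ, D_X2]
  -- term-wise description
  set term : (Fin 3 →₀ ℕ) → MvPolynomial (Fin 3) K :=
    fun m => C (coeff m f) * P ^ (m v) * (C γ * X 2) ^ (m 2) with hterm
  have hexp : aeval img f = ∑ m ∈ f.support, term m := by
    conv_lhs => rw [← support_sum_monomial_coeff f]
    rw [map_sum]
    refine Finset.sum_congr rfl fun m hm => ?_
    have hprod : aeval img (monomial m (coeff m f)) = C (coeff m f) * ∏ j : Fin 3, img j ^ m j := by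
      rw [aeval_monomial, Finsupp.prod_fintype]
      · rfl
      · intro j; exact pow_zero _
    rw [hprod, Fin.prod_univ_three]
    have hmo : m o = 0 := ho m hm
    rcases hvo with ⟨hv, ho'⟩ | ⟨hv, ho'⟩ <;> subst hv <;> subst ho' <;>
      rw [hmo, pow_zero, h2] <;> simp [hterm] <;> ring
  set T : Finset (Fin 3 →₀ ℕ) := f.support.filter (fun m => m v = d) with hT
  obtain ⟨m₁, hm₁s, hm₁v⟩ : ∃ m₁ ∈ f.support, m₁ v = d := by
    rw [hdd, degreeOf_eq_sup]
    obtain ⟨m₁, h1, h2⟩ := Finset.exists_mem_eq_sup f.support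
      (MvPolynomial.support_nonempty.mpr hf) (fun m => m v)
    exact ⟨m₁, h1, h2.symm⟩
  have hm₁T : m₁ ∈ T := Finset.mem_filter.2 ⟨hm₁s, hm₁v⟩
  set G : MvPolynomial (Fin 3) K :=
    ∑ m ∈ T, monomial (Finsupp.single 2 (m 2)) (coeff m f * γ ^ (m 2)) with hG
  -- each member of T is determined by its 2-component
  have hTdet : ∀ m ∈ T, ∀ m' ∈ T, m 2 = m' 2 → m = m' := by
    intro m hm m' hm'  h22
    have hmv : m v = d := (Finset.mem_filter.1 hm).2
    have hm'v : m' v = d := (Finset.mem_filter.1 hm').2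
    have hmo : m o = 0 := ho m (Finset.mem_filter.1 hm).1
    have hm'o : m' o = 0 := ho m' (Finset.mem_filter.1 hm').1
    ext j
    rcases hvo with ⟨hv, ho'⟩ | ⟨hv, ho'⟩ <;> subst hv <;> subst ho' <;> fin_cases j <;>
      simp_all
  have hGne : G ≠ 0 := by
    intro h0
    have hc : coeff (Finsupp.single 2 (m₁ 2)) G = coeff m₁ f * γ ^ (m₁ 2) := by
      rw [hG, coeff_sum]
      rw [Finset.sum_eq_single m₁]
      · rw [coeff_monomial, if_pos rfl]
      · intro m hm hne
        rw [coeff_monomial, if_neg]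
        intro hval
        exact hne (hTdet m hm m₁ hm₁T (Finsupp.single_injective 2 hval))
      · intro h; exact absurd hm₁T h
    rw [h0] at hc
    simp only [coeff_zero] at hc
    exact (mul_ne_zero (mem_support_iff.1 hm₁s) (pow_ne_zero _ hγ)) hc.symm
  have hGD : D G = 0 := by
    have : degreeOf 0 G = 0 := by
      have h1 : degreeOf (0 : Fin 3) G ≤ T.sup fun m => degreeOf (0 : Fin 3)
          (monomial (Finsupp.single 2 (m 2)) (coeff m f * γ ^ (m 2))) := degreeOf_sum_le _ _ _
      have h2' : ∀ m ∈ T, degreeOf (0 : Fin 3)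
          (monomial (Finsupp.single 2 (m 2)) (coeff m f * γ ^ (m 2))) = 0 := by
        intro m hm
        rw [degreeOf_monomial_eq _ _ (mul_ne_zero (mem_support_iff.1 (Finset.mem_filter.1 hm).1)
          (pow_ne_zero _ hγ))]
        simp [Finsupp.single_apply]
      have : T.sup (fun m => degreeOf (0 : Fin 3) (monomial (Finsupp.single 2 (m 2))
          (coeff m f * γ ^ (m 2)))) ≤ 0 := Finset.sup_le fun m hm => le_of_eq (h2' m hm)
      omega
    rw [D, natDegree_finSuccEquiv]
    exact this
  have hTsum : ∑ m ∈ T, term m = P ^ d * G := by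
    rw [hG, Finset.mul_sum]
    refine Finset.sum_congr rfl fun m hm => ?_
    have hmv : m v = d := (Finset.mem_filter.1 hm).2
    simp only [hterm]
    rw [mono_single, hmv, mul_pow, ← C_pow, C_mul]
    ring
  have htopne : P ^ d * G ≠ 0 := mul_ne_zero (pow_ne_zero _ hPne) hGne
  have htopD : D (P ^ d * G) = n * d := by
    rw [D_mul (pow_ne_zero _ hPne) hGne, D_pow hPne, hGD, hPD]
    ring
  -- rest
  set Rest : MvPolynomial (Fin 3) K := ∑ m ∈ f.support.filter (fun m => ¬ m v = d), term m
    with hRest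
  have hsplit : aeval img f = P ^ d * G + Rest := by
    rw [hexp, ← Finset.sum_filter_add_sum_filter_not f.support (fun m => m v = d) term,
      ← hT, hTsum, hRest]
  have htermD : ∀ m ∈ f.support, D (term m) = n * (m v) := by
    intro m hm
    have hc : (C (coeff m f) : MvPolynomial (Fin 3) K) ≠ 0 := by
      simpa using mem_support_iff.1 hm
    simp only [hterm]
    rw [D_mul (mul_ne_zero hc (pow_ne_zero _ hPne)) (pow_ne_zero _ hCX2),
      D_mul hc (pow_ne_zero _ hPne), D_C, D_pow hPne _, D_pow hCX2, hDCX2, hPD]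
    ring
  rcases eq_or_ne Rest 0 with hR0 | hRne
  · rw [hsplit, hR0, add_zero]
    exact ⟨htopD, htopne⟩
  · have hRD : D Rest < n * d := by
      have hne : (f.support.filter (fun m => ¬ m v = d)).Nonempty := by
        by_contra h
        rw [Finset.not_nonempty_iff_eq_empty] at h
        rw [hRest, h, Finset.sum_empty] at hRne
        exact hRne rfl
      have hd1 : 1 ≤ d := by
        obtain ⟨m, hm⟩ := hne
        have hms := (Finset.mem_filter.1 hm).1
        have hmlt : m v < d := by
          have hle : m v ≤ d := by
            rw [hdd, degreeOf_eq_sup]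
            exact Finset.le_sup (f := fun m => m v) hms
          have := (Finset.mem_filter.1 hm).2
          omega
        omega
      have hb : ∀ m ∈ f.support.filter (fun m => ¬ m v = d),
          (MvPolynomial.finSuccEquiv K 2 (term m)).natDegree ≤ n * d - 1 := by
        intro m hm
        have hms := (Finset.mem_filter.1 hm).1
        have hmlt : m v < d := by
          have hle : m v ≤ d := by
            rw [hdd, degreeOf_eq_sup]
            exact Finset.le_sup (f := fun m => m v) hms
          have := (Finset.mem_filter.1 hm).2
          omega
        have := htermD m hms
        have h1 : D (term m) ≤ n * (d-1) := by
          rw [this]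
          exact Nat.mul_le_mul_left n (by omega)
        have h2 : n * (d - 1) ≤ n * d - n := by
          rcases d with _ | d'
          · omega
          · simp [Nat.succ_sub_one, Nat.mul_succ]
        simp only [D] at h1
        have hnd : n ≤ n * d := Nat.le_mul_of_pos_right n (by omega)
        omega
      have : D Rest ≤ n * d - 1 := by
        simpa [D, hRest, map_sum] using Polynomial.natDegree_sum_le_of_forall_le
          (f.support.filter (fun m => ¬ m v = d))
          (fun m => MvPolynomial.finSuccEquiv K 2 (term m)) hb
      have hnd : 1 ≤ n * d := Nat.one_le_iff_ne_zero.2 (by positivity)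
      omega
    rw [hsplit]
    have := D_add_left (f := P ^ d * G) (g := Rest) (by rw [htopD]; exact hRD)
    rw [htopD] at this
    exact this


lemma weight_fin3 (w : Fin 3 → ℤ) (m : Fin 3 →₀ ℕ) :
    Finsupp.weight w m = m 0 • w 0 + m 1 • w 1 + m 2 • w 2 := by
  rw [Finsupp.weight_apply, Finsupp.sum_fintype]
  · exact Fin.sum_univ_three _
  · intro j; exact zero_smul _ _

lemma IsWH_pow {w : Fin 3 → ℤ} {g : MvPolynomial (Fin 3) K} {M : ℤ}
    (h : IsWeightedHomogeneous w g M) (k : ℕ) : IsWeightedHomogeneous w (g ^ k) (k • M) := by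
  induction k with
  | zero => simpa using isWeightedHomogeneous_one _ _
  | succ k ih =>
      rw [pow_succ, succ_nsmul]
      exact ih.mul h

lemma IsWH_sub {w : Fin 3 → ℤ} {A B : MvPolynomial (Fin 3) K} {d : ℤ}
    (hA : IsWeightedHomogeneous w A d) (hB : IsWeightedHomogeneous w B d) :
    IsWeightedHomogeneous w (A - B) d := by
  intro m hm
  rw [coeff_sub] at hm
  rcases eq_or_ne (coeff m A) 0 with h1 | h1
  · exact hB (by intro h2; rw [h1, h2, sub_zero] at hm; exact hm rfl)
  · exact hA h1

lemma hom_aeval {w : Fin 3 → ℤ} (img : Fin 3 → MvPolynomial (Fin 3) K)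
    (himg : ∀ j, IsWeightedHomogeneous w (img j) (w j))
    {f : MvPolynomial (Fin 3) K} {d : ℤ} (hf : IsWeightedHomogeneous w f d) :
    IsWeightedHomogeneous w (aeval img f) d := by
  conv_lhs => rw [← support_sum_monomial_coeff f]
  rw [map_sum]
  apply IsWeightedHomogeneous.sum
  intro m hm
  have hprod : aeval img (monomial m (coeff m f)) = C (coeff m f) * ∏ j : Fin 3, img j ^ m j := by
    rw [aeval_monomial, Finsupp.prod_fintype]
    · rfl
    · intro j; exact pow_zero _
  rw [hprod, Fin.prod_univ_three]
  have hw : m 0 • w 0 + m 1 • w 1 + m 2 • w 2 = d := by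
    rw [← weight_fin3]
    exact hf (mem_support_iff.1 hm)
  have := (isWeightedHomogeneous_C w (coeff m f)).mul
    ((((IsWH_pow (himg 0) (m 0)).mul (IsWH_pow (himg 1) (m 1))).mul (IsWH_pow (himg 2) (m 2))))
  rw [← mul_assoc] at this ⊢
  convert this using 2
  omega

lemma equiv_apply_eq_aeval (θ : MvPolynomial (Fin 3) K ≃ₐ[K] MvPolynomial (Fin 3) K)
    (f : MvPolynomial (Fin 3) K) : θ f = aeval (fun j => θ (X j)) f := by
  have : θ f = θ.toAlgHom f := rfl
  rw [this]
  conv_lhs => rw [aeval_unique θ.toAlgHom]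
  rfl

/-- Substitution by a "diagonal" map on the variables `X v, X 2` of a polynomial supported
away from `X o`. -/
lemma subst_diag_eq (v o : Fin 3) (hvo : (v = 0 ∧ o = 1) ∨ (v = 1 ∧ o = 0))
    (θ : MvPolynomial (Fin 3) K ≃ₐ[K] MvPolynomial (Fin 3) K) (βv γ : K)
    (hv : θ (X v) = C βv * X v) (h2 : θ (X 2) = C γ * X 2)
    (f : MvPolynomial (Fin 3) K) (ho : ∀ m ∈ f.support, m o = 0) :
    θ f = ∑ m ∈ f.support, monomial m (coeff m f * βv ^ (m v) * γ ^ (m 2)) := by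
  rw [equiv_apply_eq_aeval]
  conv_lhs => rw [← support_sum_monomial_coeff f]
  rw [map_sum]
  refine Finset.sum_congr rfl fun m hm => ?_
  have hprod : aeval (fun j => θ (X j)) (monomial m (coeff m f)) =
      C (coeff m f) * ∏ j : Fin 3, (θ (X j)) ^ m j := by
    rw [aeval_monomial, Finsupp.prod_fintype]
    · rfl
    · intro j; exact pow_zero _
  have hmdec : m = Finsupp.single v (m v) + Finsupp.single 2 (m 2) := by
    ext j
    have hmo := ho m hm
    rcases hvo with ⟨hv', ho'⟩ | ⟨hv', ho'⟩ <;> subst hv' <;> subst ho' <;> fin_cases j <;>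
      simp_all [Finsupp.single_apply]
  rw [hprod, Fin.prod_univ_three]
  have hmo : m o = 0 := ho m hm
  have key : (C βv * X v : MvPolynomial (Fin 3) K) ^ (m v) * (C γ * X 2) ^ (m 2) =
      C (βv ^ (m v) * γ ^ (m 2)) * (monomial (Finsupp.single v (m v) + Finsupp.single 2 (m 2))
        (1 : K)) := by
    rw [mul_pow, mul_pow, ← C_pow, ← C_pow, X_pow_eq_monomial, X_pow_eq_monomial,
      mul_mul_mul_comm, ← C_mul, monomial_mul, mul_one]
  rcases hvo with ⟨hv', ho'⟩ | ⟨hv', ho'⟩ <;> subst hv' <;> subst ho' <;>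
      rw [hv, h2, hmo, pow_zero]
  · rw [mul_one, key, ← hmdec, C_mul_monomial, C_mul_monomial]
    congr 1
    ring
  · rw [one_mul, key, ← hmdec, C_mul_monomial, C_mul_monomial]
    congr 1
    ring

variable (K) in
/-- `w = x z^t + y^q`. -/
noncomputable def Wp (q t : ℕ) : MvPolynomial (Fin 3) K := X 0 * X 2 ^ t + X 1 ^ q

variable (K) in
/-- `u = w^i z^{t'}`. -/
noncomputable def Up (q t i t' : ℕ) : MvPolynomial (Fin 3) K := (Wp K q t) ^ i * X 2 ^ t'

variable (K) in
/-- the first coordinate of the automorphism: `x ∓ Σ ...`. -/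
noncomputable def FF (q t i t' : ℕ) (ε : K) : MvPolynomial (Fin 3) K :=
  X 0 - ∑ k ∈ Finset.Icc 1 q,
    C (ε ^ k * (q.choose k : K)) * (X 1 ^ (q - k) * (Wp K q t) ^ (i * k) * X 2 ^ (t' * k - t))

section Identities
variable (q t i t' : ℕ)

lemma SUMID (ε : K) (Y : MvPolynomial (Fin 3) K) :
    ∑ k ∈ Finset.Icc 1 q, C (ε ^ k * (q.choose k : K)) *
      (Y ^ (q - k) * (Wp K q t) ^ (i * k) * X 2 ^ (t' * k)) =
    (Y + C ε * Up K q t i t') ^ q - Y ^ q := by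
  have hr : Finset.range (q + 1) = insert 0 (Finset.Icc 1 q) := by
    ext x; simp [Nat.lt_succ_iff]; omega
  rw [add_comm Y (C ε * Up K q t i t'), add_pow, hr, Finset.sum_insert (by simp)]
  simp only [pow_zero, one_mul, Nat.sub_zero, Nat.choose_zero_right, Nat.cast_one, mul_one]
  rw [add_sub_cancel_left]
  refine Finset.sum_congr rfl fun k hk => ?_
  have hU : (Up K q t i t') ^ k = (Wp K q t) ^ (i * k) * X 2 ^ (t' * k) := by
    rw [Up, mul_pow, ← pow_mul, ← pow_mul]
  rw [mul_pow, ← C_pow, hU]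
  rw [show ((q.choose k : MvPolynomial (Fin 3) K)) = C ((q.choose k : K)) by
    rw [← map_natCast (C : K →+* MvPolynomial (Fin 3) K)]]
  rw [C_mul]
  ring

lemma GSUM (htt' : t ≤ t') (ε : K) (Y : MvPolynomial (Fin 3) K) :
    (∑ k ∈ Finset.Icc 1 q, C (ε ^ k * (q.choose k : K)) *
      (Y ^ (q - k) * (Wp K q t) ^ (i * k) * X 2 ^ (t' * k - t))) * X 2 ^ t =
    (Y + C ε * Up K q t i t') ^ q - Y ^ q := by
  rw [Finset.sum_mul, ← SUMID q t i t' ε Y]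
  refine Finset.sum_congr rfl fun k hk => ?_
  have hk1 : 1 ≤ k := (Finset.mem_Icc.1 hk).1
  have ht : t ≤ t' * k := le_trans htt' (Nat.le_mul_of_pos_right t' (by omega))
  rw [mul_assoc, mul_assoc, ← pow_add, Nat.sub_add_cancel ht]

lemma FFmul (htt' : t ≤ t') (ε : K) :
    FF K q t i t' ε * X 2 ^ t =
      X 0 * X 2 ^ t - ((X 1 + C ε * Up K q t i t') ^ q - X 1 ^ q) := by
  rw [FF, sub_mul, GSUM q t i t' htt']


end Identities

section Maps
variable (q t i t' : ℕ)

lemma algHom_C' (A : MvPolynomial (Fin 3) K →ₐ[K] MvPolynomial (Fin 3) K) (r : K) :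
    A (C r) = C r := by
  rw [← MvPolynomial.algebraMap_eq]
  exact A.commutes r

lemma hom_W (htt' : t ≤ t') (A : MvPolynomial (Fin 3) K →ₐ[K] MvPolynomial (Fin 3) K) (ε : K)
    (hA0 : A (X 0) = FF K q t i t' ε) (hA1 : A (X 1) = X 1 + C ε * Up K q t i t')
    (hA2 : A (X 2) = X 2) : A (Wp K q t) = Wp K q t := by
  rw [Wp, map_add, map_mul, map_pow, map_pow, hA0, hA1, hA2]
  have := FFmul q t i t' htt' (K := K) ε
  linear_combination this

lemma hom_U (htt' : t ≤ t') (A : MvPolynomial (Fin 3) K →ₐ[K] MvPolynomial (Fin 3) K) (ε : K)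
    (hA0 : A (X 0) = FF K q t i t' ε) (hA1 : A (X 1) = X 1 + C ε * Up K q t i t')
    (hA2 : A (X 2) = X 2) : A (Up K q t i t') = Up K q t i t' := by
  rw [Up, map_mul, map_pow, map_pow, hom_W q t i t' htt' A ε hA0 hA1 hA2, hA2]

lemma hom_FF (htt' : t ≤ t') (A : MvPolynomial (Fin 3) K →ₐ[K] MvPolynomial (Fin 3) K) (ε : K)
    (hA0 : A (X 0) = FF K q t i t' ε) (hA1 : A (X 1) = X 1 + C ε * Up K q t i t')
    (hA2 : A (X 2) = X 2) : A (FF K q t i t' (-ε)) = X 0 := by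
  have hX2ne : (X 2 : MvPolynomial (Fin 3) K) ^ t ≠ 0 := pow_ne_zero _ (X_ne_zero 2)
  apply mul_right_cancel₀ hX2ne
  have hAFF : A (FF K q t i t' (-ε)) = FF K q t i t' ε - ∑ k ∈ Finset.Icc 1 q,
      C ((-ε) ^ k * (q.choose k : K)) * ((X 1 + C ε * Up K q t i t') ^ (q - k) *
        (Wp K q t) ^ (i * k) * X 2 ^ (t' * k - t)) := by
    have hW := hom_W q t i t' htt' A ε hA0 hA1 hA2
    rw [FF, map_sub, map_sum, hA0]
    simp only [map_mul, map_pow, hW, hA1, hA2, algHom_C']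
  rw [hAFF, sub_mul]
  have h1 := FFmul q t i t' htt' (K := K) ε
  have h2 := GSUM q t i t' htt' (K := K) (-ε) (X 1 + C ε * Up K q t i t')
  rw [show (C (-ε) : MvPolynomial (Fin 3) K) = - C ε from map_neg _ _] at h2
  linear_combination h1 - h2

variable (K) in
noncomputable def Aal (q t i t' : ℕ) : MvPolynomial (Fin 3) K →ₐ[K] MvPolynomial (Fin 3) K :=
  aeval ![FF K q t i t' 1, X 1 + Up K q t i t', X 2]

variable (K) in
noncomputable def Bal (q t i t' : ℕ) : MvPolynomial (Fin 3) K →ₐ[K] MvPolynomial (Fin 3) K :=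
  aeval ![FF K q t i t' (-1), X 1 - Up K q t i t', X 2]

lemma Aal_X0 : Aal K q t i t' (X 0) = FF K q t i t' 1 := by simp [Aal]
lemma Aal_X1 : Aal K q t i t' (X 1) = X 1 + C (1:K) * Up K q t i t' := by
  simp [Aal]
lemma Aal_X2 : Aal K q t i t' (X 2) = X 2 := by
  rw [Aal, aeval_X]; rfl
lemma Bal_X0 : Bal K q t i t' (X 0) = FF K q t i t' (-1) := by simp [Bal]
lemma Bal_X1 : Bal K q t i t' (X 1) = X 1 + C (-1:K) * Up K q t i t' := by
  simp [Bal]; ring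
lemma Bal_X2 : Bal K q t i t' (X 2) = X 2 := by
  rw [Bal, aeval_X]; rfl

variable (K) in
/-- The candidate graded-wild automorphism. -/
noncomputable def phi (q t i t' : ℕ) (htt' : t ≤ t') :
    MvPolynomial (Fin 3) K ≃ₐ[K] MvPolynomial (Fin 3) K := by
  refine AlgEquiv.ofAlgHom (Aal K q t i t') (Bal K q t i t') ?_ ?_ <;>
    apply MvPolynomial.algHom_ext <;> intro j <;> fin_cases j
  · show Aal K q t i t' (Bal K q t i t' (X 0)) = X 0
    rw [Bal_X0]
    exact hom_FF q t i t' htt' _ 1 (Aal_X0 ..) (Aal_X1 ..) (Aal_X2 ..)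
  · show Aal K q t i t' (Bal K q t i t' (X 1)) = X 1
    rw [Bal_X1, map_add, map_mul, Aal_X1,
      hom_U q t i t' htt' _ 1 (Aal_X0 ..) (Aal_X1 ..) (Aal_X2 ..)]
    rw [algHom_C' _, C_1,
      show (C (-1:K) : MvPolynomial (Fin 3) K) = -1 by rw [map_neg, map_one]]
    ring
  · show Aal K q t i t' (Bal K q t i t' (X 2)) = X 2
    rw [Bal_X2, Aal_X2]
  · show Bal K q t i t' (Aal K q t i t' (X 0)) = X 0
    rw [Aal_X0, show (1 : K) = -(-1) from by ring]
    exact hom_FF q t i t' htt' _ (-1) (Bal_X0 ..) (Bal_X1 ..) (Bal_X2 ..)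
  · show Bal K q t i t' (Aal K q t i t' (X 1)) = X 1
    rw [Aal_X1, map_add, map_mul, Bal_X1,
      hom_U q t i t' htt' _ (-1) (Bal_X0 ..) (Bal_X1 ..) (Bal_X2 ..)]
    rw [algHom_C' _, C_1,
      show (C (-1:K) : MvPolynomial (Fin 3) K) = -1 by rw [map_neg, map_one]]
    ring
  · show Bal K q t i t' (Aal K q t i t' (X 2)) = X 2
    rw [Aal_X2, Bal_X2]

lemma phi_X0 (htt' : t ≤ t') : phi K q t i t' htt' (X 0) = FF K q t i t' 1 := Aal_X0 ..
lemma phi_X1 (htt' : t ≤ t') :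
    phi K q t i t' htt' (X 1) = X 1 + C (1:K) * Up K q t i t' := Aal_X1 ..
lemma phi_X2 (htt' : t ≤ t') : phi K q t i t' htt' (X 2) = X 2 := Aal_X2 ..

end Maps


section Shapes
variable {K : Type*} [Field K]

lemma emap_ne (θ : MvPolynomial (Fin 3) K ≃ₐ[K] MvPolynomial (Fin 3) K)
    {p : MvPolynomial (Fin 3) K} (hp : p ≠ 0) : θ p ≠ 0 := by
  intro h
  exact hp (by simpa using θ.injective (h.trans (map_zero θ).symm))

lemma diag_entry_ne (θ : MvPolynomial (Fin 3) K ≃ₐ[K] MvPolynomial (Fin 3) K)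
    {v : Fin 3} {α : K} (h : θ (X v) = C α * X v) : α ≠ 0 := by
  intro h0
  subst h0
  have := emap_ne θ (X_ne_zero (R := K) v)
  rw [h] at this
  simp at this

lemma subst_diag_support_subset (v o : Fin 3) (hvo : (v = 0 ∧ o = 1) ∨ (v = 1 ∧ o = 0))
    (θ : MvPolynomial (Fin 3) K ≃ₐ[K] MvPolynomial (Fin 3) K) (βv γ : K)
    (hv : θ (X v) = C βv * X v) (h2 : θ (X 2) = C γ * X 2)
    (f : MvPolynomial (Fin 3) K) (ho : ∀ m ∈ f.support, m o = 0) :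
    (θ f).support ⊆ f.support := by
  rw [subst_diag_eq v o hvo θ βv γ hv h2 f ho]
  intro m' hm'
  by_contra hns
  rw [mem_support_iff] at hm'
  apply hm'
  rw [coeff_sum]
  apply Finset.sum_eq_zero
  intro m hm
  rw [coeff_monomial, if_neg]
  intro h
  subst h
  exact hns hm

lemma subst_fix (v o : Fin 3) (hvo : (v = 0 ∧ o = 1) ∨ (v = 1 ∧ o = 0))
    (θ : MvPolynomial (Fin 3) K ≃ₐ[K] MvPolynomial (Fin 3) K)
    (hv : θ (X v) = X v) (h2 : θ (X 2) = X 2)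
    (f : MvPolynomial (Fin 3) K) (ho : ∀ m ∈ f.support, m o = 0) : θ f = f := by
  have h := subst_diag_eq v o hvo θ 1 1 (by rw [hv, C_1, one_mul]) (by rw [h2, C_1, one_mul]) f ho
  simp only [one_pow, mul_one] at h
  rw [h]
  exact support_sum_monomial_coeff f

lemma Cmul_support_subset (r : K) (g : MvPolynomial (Fin 3) K) :
    (C r * g).support ⊆ g.support := by
  intro m hm
  rw [mem_support_iff, coeff_C_mul] at hm
  rw [mem_support_iff]
  intro h
  rw [h, mul_zero] at hm
  exact hm rfl

lemma aeval_mem_subalgebra (S : Subalgebra K (MvPolynomial (Fin 3) K))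
    (imgs : Fin 3 → MvPolynomial (Fin 3) K) (h : ∀ j, imgs j ∈ S)
    (p : MvPolynomial (Fin 3) K) : aeval imgs p ∈ S := by
  induction p using MvPolynomial.induction_on with
  | C r => rw [aeval_C]; exact S.algebraMap_mem r
  | add p q hp hq => rw [map_add]; exact S.add_mem hp hq
  | mul_X p j hp => rw [map_mul, aeval_X]; exact S.mul_mem hp (h j)

lemma eqv_one (θ : MvPolynomial (Fin 3) K ≃ₐ[K] MvPolynomial (Fin 3) K)
    (h : ∀ j, θ (X j) = X j) : θ = 1 := by
  apply AlgEquiv.ext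
  intro p
  rw [equiv_apply_eq_aeval]
  have : (fun j => θ (X j)) = X := funext h
  rw [this, aeval_X_left_apply]
  rfl

/-- diagonal automorphisms. -/
def DiagS (ψ : MvPolynomial (Fin 3) K ≃ₐ[K] MvPolynomial (Fin 3) K) : Prop :=
  ∃ α β γ : K, ψ (X 0) = C α * X 0 ∧ ψ (X 1) = C β * X 1 ∧ ψ (X 2) = C γ * X 2

/-- elementary automorphisms in `x` whose added polynomial has all `y`-exponents `≥ q+c`. -/
def EShape (q c : ℕ) (ψ : MvPolynomial (Fin 3) K ≃ₐ[K] MvPolynomial (Fin 3) K) : Prop :=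
  ∃ F : MvPolynomial (Fin 3) K, F ≠ 0 ∧ (∀ m ∈ F.support, m 0 = 0 ∧ q + c ≤ m 1) ∧
    ψ (X 0) = X 0 + F ∧ ψ (X 1) = X 1 ∧ ψ (X 2) = X 2

/-- elementary automorphisms in `y` whose added polynomial has all `x`-exponents `≥ 1`. -/
def FShape (ψ : MvPolynomial (Fin 3) K ≃ₐ[K] MvPolynomial (Fin 3) K) : Prop :=
  ∃ G : MvPolynomial (Fin 3) K, G ≠ 0 ∧ (∀ m ∈ G.support, m 1 = 0 ∧ 1 ≤ m 0) ∧
    ψ (X 0) = X 0 ∧ ψ (X 1) = X 1 + G ∧ ψ (X 2) = X 2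

/-- triangular-in-`y` automorphisms. -/
def AS (ψ : MvPolynomial (Fin 3) K ≃ₐ[K] MvPolynomial (Fin 3) K) : Prop :=
  (∃ α : K, ψ (X 0) = C α * X 0) ∧
  (∃ (β : K) (g : MvPolynomial (Fin 3) K), (∀ m ∈ g.support, m 1 = 0 ∧ 1 ≤ m 0) ∧
    ψ (X 1) = C β * X 1 + g) ∧
  (∃ γ : K, ψ (X 2) = C γ * X 2)

/-- triangular-in-`x` automorphisms. -/
def BS (ψ : MvPolynomial (Fin 3) K ≃ₐ[K] MvPolynomial (Fin 3) K) : Prop :=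
  (∃ (α : K) (f : MvPolynomial (Fin 3) K), (∀ m ∈ f.support, m 0 = 0) ∧
    ψ (X 0) = C α * X 0 + f) ∧
  (∃ β : K, ψ (X 1) = C β * X 1) ∧
  (∃ γ : K, ψ (X 2) = C γ * X 2)

lemma AS_one : AS (1 : MvPolynomial (Fin 3) K ≃ₐ[K] MvPolynomial (Fin 3) K) := by
  refine ⟨⟨1, ?_⟩, ⟨1, 0, ?_, ?_⟩, ⟨1, ?_⟩⟩ <;> simp

lemma DiagS_one : DiagS (1 : MvPolynomial (Fin 3) K ≃ₐ[K] MvPolynomial (Fin 3) K) :=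
  ⟨1, 1, 1, by simp, by simp, by simp⟩

/-- normal forms for graded tame automorphisms. -/
inductive NF (q c : ℕ) :
    (MvPolynomial (Fin 3) K ≃ₐ[K] MvPolynomial (Fin 3) K) → Bool → Prop
  | baseA : ∀ {θ}, AS θ → NF q c θ true
  | baseB : ∀ {θ}, BS θ → NF q c θ false
  | stepB : ∀ {θ ψ δ}, NF q c θ true → EShape q c ψ → DiagS δ → NF q c (θ * ψ * δ) false
  | stepA : ∀ {θ ψ δ}, NF q c θ false → FShape ψ → DiagS δ → NF q c (θ * ψ * δ) true

end Shapes


section Closure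
variable {K : Type*} [Field K] {q c : ℕ}

lemma eqv_C (θ : MvPolynomial (Fin 3) K ≃ₐ[K] MvPolynomial (Fin 3) K) (r : K) :
    θ (C r) = C r := by
  rw [← MvPolynomial.algebraMap_eq]
  exact θ.commutes r

lemma eqv_C_mul (θ : MvPolynomial (Fin 3) K ≃ₐ[K] MvPolynomial (Fin 3) K) (r : K)
    (p : MvPolynomial (Fin 3) K) : θ (C r * p) = C r * θ p := by
  rw [map_mul, eqv_C]

lemma DiagS_mul {δ δ' : MvPolynomial (Fin 3) K ≃ₐ[K] MvPolynomial (Fin 3) K}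
    (h : DiagS δ) (h' : DiagS δ') : DiagS (δ * δ') := by
  obtain ⟨α, β, γ, h0, h1, h2⟩ := h
  obtain ⟨α', β', γ', h0', h1', h2'⟩ := h'
  refine ⟨α * α', β * β', γ * γ', ?_, ?_, ?_⟩ <;>
    rw [AlgEquiv.mul_apply] <;> [rw [h0']; rw [h1']; rw [h2']] <;>
    rw [eqv_C_mul] <;> [rw [h0]; rw [h1]; rw [h2]] <;> rw [← mul_assoc, ← C_mul] <;>
    ring_nf

lemma AS_mul_diag {θ δ : MvPolynomial (Fin 3) K ≃ₐ[K] MvPolynomial (Fin 3) K}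
    (h : AS θ) (h' : DiagS δ) : AS (θ * δ) := by
  obtain ⟨⟨α, h0⟩, ⟨β, g, hg, h1⟩, ⟨γ, h2⟩⟩ := h
  obtain ⟨α', β', γ', h0', h1', h2'⟩ := h'
  refine ⟨⟨α' * α, ?_⟩, ⟨β' * β, C β' * g, fun m hm => hg m (Cmul_support_subset β' g hm), ?_⟩,
    ⟨γ' * γ, ?_⟩⟩
  · rw [AlgEquiv.mul_apply, h0', eqv_C_mul, h0, ← mul_assoc, ← C_mul]
  · rw [AlgEquiv.mul_apply, h1', eqv_C_mul, h1, mul_add, ← mul_assoc, ← C_mul]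
  · rw [AlgEquiv.mul_apply, h2', eqv_C_mul, h2, ← mul_assoc, ← C_mul]

lemma BS_mul_diag {θ δ : MvPolynomial (Fin 3) K ≃ₐ[K] MvPolynomial (Fin 3) K}
    (h : BS θ) (h' : DiagS δ) : BS (θ * δ) := by
  obtain ⟨⟨α, f, hf, h0⟩, ⟨β, h1⟩, ⟨γ, h2⟩⟩ := h
  obtain ⟨α', β', γ', h0', h1', h2'⟩ := h'
  refine ⟨⟨α' * α, C α' * f, fun m hm => hf m (Cmul_support_subset α' f hm), ?_⟩,
    ⟨β' * β, ?_⟩, ⟨γ' * γ, ?_⟩⟩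
  · rw [AlgEquiv.mul_apply, h0', eqv_C_mul, h0, mul_add, ← mul_assoc, ← C_mul]
  · rw [AlgEquiv.mul_apply, h1', eqv_C_mul, h1, ← mul_assoc, ← C_mul]
  · rw [AlgEquiv.mul_apply, h2', eqv_C_mul, h2, ← mul_assoc, ← C_mul]

lemma NF_mul_diag {θ δ' : MvPolynomial (Fin 3) K ≃ₐ[K] MvPolynomial (Fin 3) K} {s : Bool}
    (h : NF q c θ s) (h' : DiagS δ') : NF q c (θ * δ') s := by
  induction h with
  | baseA hAS => exact NF.baseA (AS_mul_diag hAS h')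
  | baseB hBS => exact NF.baseB (BS_mul_diag hBS h')
  | @stepB θ₀ ψ δ hθ hψ hδ _ =>
      rw [mul_assoc (θ₀ * ψ)]
      exact NF.stepB hθ hψ (DiagS_mul hδ h')
  | @stepA θ₀ ψ δ hθ hψ hδ _ =>
      rw [mul_assoc (θ₀ * ψ)]
      exact NF.stepA hθ hψ (DiagS_mul hδ h')

lemma inv_diag_apply {δ : MvPolynomial (Fin 3) K ≃ₐ[K] MvPolynomial (Fin 3) K}
    {v : Fin 3} {α : K} (h : δ (X v) = C α * X v) : δ⁻¹ (X v) = C α⁻¹ * X v := by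
  have hα : α ≠ 0 := diag_entry_ne δ h
  have key : δ (C α⁻¹ * X v) = X v := by
    rw [eqv_C_mul, h, ← mul_assoc, ← C_mul, inv_mul_cancel₀ hα, C_1, one_mul]
  have h2 : δ⁻¹ (δ (C α⁻¹ * X v)) = δ⁻¹ (X v) := by rw [key]
  rw [← h2, ← AlgEquiv.mul_apply, inv_mul_cancel, AlgEquiv.one_apply]

lemma twistE {δ ψ' : MvPolynomial (Fin 3) K ≃ₐ[K] MvPolynomial (Fin 3) K}
    (hδ : DiagS δ) (h : EShape q c ψ') : EShape q c (δ * ψ' * δ⁻¹) := by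
  obtain ⟨α, β, γ, h0, h1, h2⟩ := hδ
  obtain ⟨F, hFne, hFsupp, hF0, hF1, hF2⟩ := h
  have hα : α ≠ 0 := diag_entry_ne δ h0
  have hβ : β ≠ 0 := diag_entry_ne δ h1
  have hγ : γ ≠ 0 := diag_entry_ne δ h2
  have hsub : (δ F).support ⊆ F.support :=
    subst_diag_support_subset 1 0 (Or.inr ⟨rfl, rfl⟩) δ β γ h1 h2 F
      (fun m hm => (hFsupp m hm).1)
  refine ⟨C α⁻¹ * δ F, mul_ne_zero (by simpa using inv_ne_zero hα) (emap_ne δ hFne),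
    fun m hm => hFsupp m (hsub (Cmul_support_subset _ _ hm)), ?_, ?_, ?_⟩
  · rw [AlgEquiv.mul_apply, AlgEquiv.mul_apply, inv_diag_apply h0, eqv_C_mul, hF0,
      eqv_C_mul, map_add, h0]
    rw [mul_add, ← mul_assoc, ← C_mul, inv_mul_cancel₀ hα, C_1, one_mul]
  · rw [AlgEquiv.mul_apply, AlgEquiv.mul_apply, inv_diag_apply h1, eqv_C_mul, hF1,
      eqv_C_mul, h1, ← mul_assoc, ← C_mul, inv_mul_cancel₀ hβ, C_1, one_mul]
  · rw [AlgEquiv.mul_apply, AlgEquiv.mul_apply, inv_diag_apply h2, eqv_C_mul, hF2,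
      eqv_C_mul, h2, ← mul_assoc, ← C_mul, inv_mul_cancel₀ hγ, C_1, one_mul]

lemma twistF {δ ψ' : MvPolynomial (Fin 3) K ≃ₐ[K] MvPolynomial (Fin 3) K}
    (hδ : DiagS δ) (h : FShape ψ') : FShape (δ * ψ' * δ⁻¹) := by
  obtain ⟨α, β, γ, h0, h1, h2⟩ := hδ
  obtain ⟨G, hGne, hGsupp, hG0, hG1, hG2⟩ := h
  have hα : α ≠ 0 := diag_entry_ne δ h0
  have hβ : β ≠ 0 := diag_entry_ne δ h1
  have hγ : γ ≠ 0 := diag_entry_ne δ h2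
  have hsub : (δ G).support ⊆ G.support :=
    subst_diag_support_subset 0 1 (Or.inl ⟨rfl, rfl⟩) δ α γ h0 h2 G
      (fun m hm => (hGsupp m hm).1)
  refine ⟨C β⁻¹ * δ G, mul_ne_zero (by simpa using inv_ne_zero hβ) (emap_ne δ hGne),
    fun m hm => hGsupp m (hsub (Cmul_support_subset _ _ hm)), ?_, ?_, ?_⟩
  · rw [AlgEquiv.mul_apply, AlgEquiv.mul_apply, inv_diag_apply h0, eqv_C_mul, hG0,
      eqv_C_mul, h0, ← mul_assoc, ← C_mul, inv_mul_cancel₀ hα, C_1, one_mul]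
  · rw [AlgEquiv.mul_apply, AlgEquiv.mul_apply, inv_diag_apply h1, eqv_C_mul, hG1,
      eqv_C_mul, map_add, h1]
    rw [mul_add, ← mul_assoc, ← C_mul, inv_mul_cancel₀ hβ, C_1, one_mul]
  · rw [AlgEquiv.mul_apply, AlgEquiv.mul_apply, inv_diag_apply h2, eqv_C_mul, hG2,
      eqv_C_mul, h2, ← mul_assoc, ← C_mul, inv_mul_cancel₀ hγ, C_1, one_mul]

lemma mergeE {ψ ψ'' : MvPolynomial (Fin 3) K ≃ₐ[K] MvPolynomial (Fin 3) K}
    (h : EShape q c ψ) (h'' : EShape q c ψ'') :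
    EShape q c (ψ * ψ'') ∨ ψ * ψ'' = 1 := by
  obtain ⟨F, hFne, hFsupp, hF0, hF1, hF2⟩ := h
  obtain ⟨F'', hF''ne, hF''supp, hF''0, hF''1, hF''2⟩ := h''
  have hfix : ψ F'' = F'' :=
    subst_fix 1 0 (Or.inr ⟨rfl, rfl⟩) ψ hF1 hF2 F'' (fun m hm => (hF''supp m hm).1)
  have hX0 : (ψ * ψ'') (X 0) = X 0 + (F + F'') := by
    rw [AlgEquiv.mul_apply, hF''0, map_add, hF0, hfix, add_assoc]
  have hX1 : (ψ * ψ'') (X 1) = X 1 := by rw [AlgEquiv.mul_apply, hF''1, hF1]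
  have hX2 : (ψ * ψ'') (X 2) = X 2 := by rw [AlgEquiv.mul_apply, hF''2, hF2]
  rcases eq_or_ne (F + F'') 0 with hz | hnz
  · right
    apply eqv_one
    intro j
    fin_cases j
    · show (ψ * ψ'') (X 0) = X 0
      rw [hX0, hz, add_zero]
    · exact hX1
    · exact hX2
  · left
    refine ⟨F + F'', hnz, fun m hm => ?_, hX0, hX1, hX2⟩
    rcases Finset.mem_union.1 (MvPolynomial.support_add hm) with h | h
    · exact hFsupp m h
    · exact hF''supp m h

lemma mergeF {ψ ψ'' : MvPolynomial (Fin 3) K ≃ₐ[K] MvPolynomial (Fin 3) K}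
    (h : FShape ψ) (h'' : FShape ψ'') :
    FShape (ψ * ψ'') ∨ ψ * ψ'' = 1 := by
  obtain ⟨G, hGne, hGsupp, hG0, hG1, hG2⟩ := h
  obtain ⟨G'', hG''ne, hG''supp, hG''0, hG''1, hG''2⟩ := h''
  have hfix : ψ G'' = G'' :=
    subst_fix 0 1 (Or.inl ⟨rfl, rfl⟩) ψ hG0 hG2 G'' (fun m hm => (hG''supp m hm).1)
  have hX1 : (ψ * ψ'') (X 1) = X 1 + (G + G'') := by
    rw [AlgEquiv.mul_apply, hG''1, map_add, hG1, hfix, add_assoc]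
  have hX0 : (ψ * ψ'') (X 0) = X 0 := by rw [AlgEquiv.mul_apply, hG''0, hG0]
  have hX2 : (ψ * ψ'') (X 2) = X 2 := by rw [AlgEquiv.mul_apply, hG''2, hG2]
  rcases eq_or_ne (G + G'') 0 with hz | hnz
  · right
    apply eqv_one
    intro j
    fin_cases j
    · exact hX0
    · show (ψ * ψ'') (X 1) = X 1
      rw [hX1, hz, add_zero]
    · exact hX2
  · left
    refine ⟨G + G'', hnz, fun m hm => ?_, hX0, hX1, hX2⟩
    rcases Finset.mem_union.1 (MvPolynomial.support_add hm) with h | h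
    · exact hGsupp m h
    · exact hG''supp m h

lemma BS_mul_E {θ ψ' : MvPolynomial (Fin 3) K ≃ₐ[K] MvPolynomial (Fin 3) K}
    (h : BS θ) (h' : EShape q c ψ') : BS (θ * ψ') := by
  obtain ⟨⟨α, f, hf, h0⟩, ⟨β, h1⟩, ⟨γ, h2⟩⟩ := h
  obtain ⟨F, hFne, hFsupp, hF0, hF1, hF2⟩ := h'
  have hsub : (θ F).support ⊆ F.support :=
    subst_diag_support_subset 1 0 (Or.inr ⟨rfl, rfl⟩) θ β γ h1 h2 F
      (fun m hm => (hFsupp m hm).1)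
  refine ⟨⟨α, f + θ F, fun m hm => ?_, ?_⟩, ⟨β, ?_⟩, ⟨γ, ?_⟩⟩
  · rcases Finset.mem_union.1 (MvPolynomial.support_add hm) with h | h
    · exact hf m h
    · exact (hFsupp m (hsub h)).1
  · rw [AlgEquiv.mul_apply, hF0, map_add, h0, add_assoc]
  · rw [AlgEquiv.mul_apply, hF1, h1]
  · rw [AlgEquiv.mul_apply, hF2, h2]

lemma AS_mul_F {θ ψ' : MvPolynomial (Fin 3) K ≃ₐ[K] MvPolynomial (Fin 3) K}
    (h : AS θ) (h' : FShape ψ') : AS (θ * ψ') := by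
  obtain ⟨⟨α, h0⟩, ⟨β, g, hg, h1⟩, ⟨γ, h2⟩⟩ := h
  obtain ⟨G, hGne, hGsupp, hG0, hG1, hG2⟩ := h'
  have hsub : (θ G).support ⊆ G.support :=
    subst_diag_support_subset 0 1 (Or.inl ⟨rfl, rfl⟩) θ α γ h0 h2 G
      (fun m hm => (hGsupp m hm).1)
  refine ⟨⟨α, ?_⟩, ⟨β, g + θ G, fun m hm => ?_, ?_⟩, ⟨γ, ?_⟩⟩
  · rw [AlgEquiv.mul_apply, hG0, h0]
  · rcases Finset.mem_union.1 (MvPolynomial.support_add hm) with h | h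
    · exact hg m h
    · exact hGsupp m (hsub h)
  · rw [AlgEquiv.mul_apply, hG1, map_add, h1, add_assoc]
  · rw [AlgEquiv.mul_apply, hG2, h2]

lemma NF_mul_E {θ ψ' : MvPolynomial (Fin 3) K ≃ₐ[K] MvPolynomial (Fin 3) K} {s : Bool}
    (h : NF q c θ s) (h' : EShape q c ψ') : ∃ s', NF q c (θ * ψ') s' := by
  cases h with
  | baseA hAS =>
      have := NF.stepB (NF.baseA hAS) h' DiagS_one
      rw [mul_one] at this
      exact ⟨false, this⟩
  | baseB hBS => exact ⟨false, NF.baseB (BS_mul_E hBS h')⟩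
  | @stepB θ₀ ψ δ hθ hψ hδ =>
      have htw : EShape q c (δ * ψ' * δ⁻¹) := twistE hδ h'
      have heq : θ₀ * ψ * δ * ψ' = θ₀ * (ψ * (δ * ψ' * δ⁻¹)) * δ := by group
      rcases mergeE hψ htw with hm | hm
      · exact ⟨false, heq ▸ NF.stepB hθ hm hδ⟩
      · rw [heq, hm, mul_one]
        exact ⟨true, NF_mul_diag hθ hδ⟩
  | @stepA θ₀ ψ δ hθ hψ hδ =>
      have := NF.stepB (NF.stepA hθ hψ hδ) h' DiagS_one
      rw [mul_one] at this
      exact ⟨false, this⟩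

lemma NF_mul_F {θ ψ' : MvPolynomial (Fin 3) K ≃ₐ[K] MvPolynomial (Fin 3) K} {s : Bool}
    (h : NF q c θ s) (h' : FShape ψ') : ∃ s', NF q c (θ * ψ') s' := by
  cases h with
  | baseA hAS => exact ⟨true, NF.baseA (AS_mul_F hAS h')⟩
  | baseB hBS =>
      have := NF.stepA (q := q) (c := c) (NF.baseB hBS) h' DiagS_one
      rw [mul_one] at this
      exact ⟨true, this⟩
  | @stepB θ₀ ψ δ hθ hψ hδ =>
      have := NF.stepA (NF.stepB hθ hψ hδ) h' DiagS_one
      rw [mul_one] at this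
      exact ⟨true, this⟩
  | @stepA θ₀ ψ δ hθ hψ hδ =>
      have htw : FShape (δ * ψ' * δ⁻¹) := twistF hδ h'
      have heq : θ₀ * ψ * δ * ψ' = θ₀ * (ψ * (δ * ψ' * δ⁻¹)) * δ := by group
      rcases mergeF hψ htw with hm | hm
      · exact ⟨true, heq ▸ NF.stepA hθ hm hδ⟩
      · rw [heq, hm, mul_one]
        exact ⟨false, NF_mul_diag hθ hδ⟩

end Closure


section DegreeLemma
variable {K : Type*} [Field K] {q c : ℕ}

lemma D_C_mul_X1 (β : K) : D (C β * X 1 : MvPolynomial (Fin 3) K) = 0 := by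
  rcases eq_or_ne β 0 with rfl | h
  · simp [D_zero]
  · rw [D_smul _ _ h, D_X1]

lemma D_C_mul_X0 {β : K} (h : β ≠ 0) : D (C β * X 0 : MvPolynomial (Fin 3) K) = 1 := by
  rw [D_smul _ _ h, D_X0]

lemma D_of_supp0 {f : MvPolynomial (Fin 3) K} (h : ∀ m ∈ f.support, m 0 = 0) : D f = 0 := by
  have h2 : degreeOf 0 f ≤ 0 := by
    rw [degreeOf_eq_sup]
    exact Finset.sup_le fun m hm => le_of_eq (h m hm)
  rw [D, natDegree_finSuccEquiv]
  omega

lemma D_pos_of_supp {f : MvPolynomial (Fin 3) K} (hne : f ≠ 0)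
    (h : ∀ m ∈ f.support, 1 ≤ m 0) : 1 ≤ D f := by
  rw [D, natDegree_finSuccEquiv, degreeOf_eq_sup]
  obtain ⟨m, hm⟩ := MvPolynomial.support_nonempty.mpr hne
  exact le_trans (h m hm) (Finset.le_sup (f := fun m => m 0) hm)

lemma degOf_ge {f : MvPolynomial (Fin 3) K} (hne : f ≠ 0) (v : Fin 3) (k : ℕ)
    (h : ∀ m ∈ f.support, k ≤ m v) : k ≤ degreeOf v f := by
  rw [degreeOf_eq_sup]
  obtain ⟨m, hm⟩ := MvPolynomial.support_nonempty.mpr hne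
  exact le_trans (h m hm) (Finset.le_sup (f := fun m => m v) hm)

lemma BS_alpha_ne {θ : MvPolynomial (Fin 3) K ≃ₐ[K] MvPolynomial (Fin 3) K}
    {α β γ : K} {f : MvPolynomial (Fin 3) K} (hfsupp : ∀ m ∈ f.support, m 0 = 0)
    (h0 : θ (X 0) = C α * X 0 + f) (h1 : θ (X 1) = C β * X 1) (h2 : θ (X 2) = C γ * X 2) :
    α ≠ 0 := by
  intro hz
  subst hz
  rw [C_0, zero_mul, zero_add] at h0
  have hmem : ∀ j, θ (X j) ∈ supported K ({1, 2} : Set (Fin 3)) := by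
    have hf : f ∈ supported K ({1, 2} : Set (Fin 3)) := by
      rw [mem_supported]
      intro j hj
      simp only [Finset.coe_sort_coe, Finset.mem_coe] at hj
      obtain ⟨m, hm, hjm⟩ := (mem_vars j).1 hj
      have : m 0 = 0 := hfsupp m hm
      have hj0 : j ≠ 0 := by
        intro h
        subst h
        rw [Finsupp.mem_support_iff] at hjm
        exact hjm this
      fin_cases j
      · exact absurd rfl hj0
      · left; rfl
      · right; rfl
    have hX1 : (X 1 : MvPolynomial (Fin 3) K) ∈ supported K ({1, 2} : Set (Fin 3)) :=
      X_mem_supported.2 (by left; rfl)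
    have hX2 : (X 2 : MvPolynomial (Fin 3) K) ∈ supported K ({1, 2} : Set (Fin 3)) :=
      X_mem_supported.2 (by right; rfl)
    intro j
    fin_cases j
    · show θ (X 0) ∈ _
      rw [h0]; exact hf
    · show θ (X 1) ∈ _
      rw [h1]
      exact Subalgebra.mul_mem _ ((supported K _).algebraMap_mem β) hX1
    · show θ (X 2) ∈ _
      rw [h2]
      exact Subalgebra.mul_mem _ ((supported K _).algebraMap_mem γ) hX2
  have hall : ∀ p, θ p ∈ supported K ({1, 2} : Set (Fin 3)) := by
    intro p
    rw [equiv_apply_eq_aeval]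
    exact aeval_mem_subalgebra _ _ hmem p
  have hX0 : (X 0 : MvPolynomial (Fin 3) K) ∈ supported K ({1, 2} : Set (Fin 3)) := by
    have := hall (θ.symm (X 0))
    rwa [AlgEquiv.apply_symm_apply] at this
  rw [X_mem_supported] at hX0
  simp only [Set.mem_insert_iff, Set.mem_singleton_iff] at hX0
  rcases hX0 with h | h <;> exact absurd h (by decide)

/-- last-letter-was-F states. -/
def GOODA (θ : MvPolynomial (Fin 3) K ≃ₐ[K] MvPolynomial (Fin 3) K) : Prop :=
  (∃ γ : K, θ (X 2) = C γ * X 2) ∧ 1 ≤ D (θ (X 0)) ∧ D (θ (X 0)) ≤ D (θ (X 1))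

/-- last-letter-was-E states. -/
def GOODB (q c : ℕ) (θ : MvPolynomial (Fin 3) K ≃ₐ[K] MvPolynomial (Fin 3) K) : Prop :=
  (∃ γ : K, θ (X 2) = C γ * X 2) ∧ 1 ≤ D (θ (X 1)) ∧
    (q + c) * D (θ (X 1)) ≤ D (θ (X 0))

lemma NF_deg (hq2 : 2 ≤ q) (hc : 1 ≤ c)
    {θ : MvPolynomial (Fin 3) K ≃ₐ[K] MvPolynomial (Fin 3) K} {s : Bool}
    (h : NF q c θ s) :
    cond s (AS θ ∨ GOODA θ) (BS θ ∨ GOODB q c θ) := by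
  induction h with
  | baseA h => exact Or.inl h
  | baseB h => exact Or.inl h
  | @stepB θ ψ δ hθ hψ hδ ih =>
      simp only [cond] at ih ⊢
      obtain ⟨F, hFne, hFsupp, hF0, hF1, hF2⟩ := hψ
      obtain ⟨α', β', γ', hd0, hd1, hd2⟩ := hδ
      have hα' : α' ≠ 0 := diag_entry_ne δ hd0
      have hβ' : β' ≠ 0 := diag_entry_ne δ hd1
      have hγ' : γ' ≠ 0 := diag_entry_ne δ hd2
      have hT0 : (θ * ψ * δ) (X 0) = C α' * (θ (X 0) + θ F) := by
        rw [AlgEquiv.mul_apply, hd0, eqv_C_mul, AlgEquiv.mul_apply, hF0, map_add]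
      have hT1 : (θ * ψ * δ) (X 1) = C β' * θ (X 1) := by
        rw [AlgEquiv.mul_apply, hd1, eqv_C_mul, AlgEquiv.mul_apply, hF1]
      have hT2 : (θ * ψ * δ) (X 2) = C γ' * θ (X 2) := by
        rw [AlgEquiv.mul_apply, hd2, eqv_C_mul, AlgEquiv.mul_apply, hF2]
      have hdF : q + c ≤ degreeOf 1 F := degOf_ge hFne 1 (q + c) fun m hm => (hFsupp m hm).2
      rcases ih with hAS | hGA
      · obtain ⟨⟨α, h0⟩, ⟨β, g, hgsupp, h1⟩, ⟨γ, h2⟩⟩ := hAS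
        have hγ : γ ≠ 0 := diag_entry_ne θ h2
        rcases eq_or_ne g 0 with rfl | hgne
        · left
          rw [add_zero] at h1
          have hsub : (θ F).support ⊆ F.support :=
            subst_diag_support_subset 1 0 (Or.inr ⟨rfl, rfl⟩) θ β γ h1 h2 F
              (fun m hm => (hFsupp m hm).1)
          refine ⟨⟨α' * α, C α' * θ F, fun m hm => (hFsupp m
            (hsub (Cmul_support_subset _ _ hm))).1, ?_⟩, ⟨β' * β, ?_⟩, ⟨γ' * γ, ?_⟩⟩
          · rw [hT0, h0, mul_add, ← mul_assoc, ← C_mul]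
          · rw [hT1, h1, ← mul_assoc, ← C_mul]
          · rw [hT2, h2, ← mul_assoc, ← C_mul]
        · right
          have hDg1 : 1 ≤ D g := D_pos_of_supp hgne fun m hm => (hgsupp m hm).2
          have hDθ1 : D (θ (X 1)) = D g ∧ θ (X 1) ≠ 0 := by
            rw [h1]
            exact D_add_right (by rw [D_C_mul_X1]; omega)
          have hsub := aeval_D 1 0 (Or.inr ⟨rfl, rfl⟩) (fun j => θ (X j)) γ hγ h2
            (D g) hDg1 hDθ1.1 hDθ1.2 F hFne (fun m hm => (hFsupp m hm).1)
          rw [← equiv_apply_eq_aeval] at hsub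
          have hbig : 1 < D g * degreeOf 1 F := by
            have : 1 * (q + c) ≤ D g * degreeOf 1 F := Nat.mul_le_mul hDg1 hdF
            omega
          have hDθ0 : D (θ (X 0)) = 1 := by rw [h0]; exact D_C_mul_X0 (diag_entry_ne θ h0)
          have hD0' : D ((θ * ψ * δ) (X 0)) = D g * degreeOf 1 F := by
            rw [hT0, D_smul _ _ hα']
            exact (D_add_right (by rw [hsub.1, hDθ0]; omega)).1.trans hsub.1
          have hD1' : D ((θ * ψ * δ) (X 1)) = D g := by
            rw [hT1, D_smul _ _ hβ', hDθ1.1]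
          refine ⟨⟨γ' * γ, by rw [hT2, h2, ← mul_assoc, ← C_mul]⟩, ?_, ?_⟩
          · omega
          · rw [hD0', hD1', mul_comm (q + c) (D g)]
            exact Nat.mul_le_mul_left (D g) hdF
      · obtain ⟨⟨γ, h2⟩, h1m, hmn⟩ := hGA
        have hγ : γ ≠ 0 := diag_entry_ne θ h2
        right
        have hθ1ne : θ (X 1) ≠ 0 := emap_ne θ (X_ne_zero 1)
        have hn1 : 1 ≤ D (θ (X 1)) := le_trans h1m hmn
        have hsub := aeval_D 1 0 (Or.inr ⟨rfl, rfl⟩) (fun j => θ (X j)) γ hγ h2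
          (D (θ (X 1))) hn1 rfl hθ1ne F hFne (fun m hm => (hFsupp m hm).1)
        rw [← equiv_apply_eq_aeval] at hsub
        have hbig : D (θ (X 0)) < D (θ (X 1)) * degreeOf 1 F := by
          have : D (θ (X 1)) * (q + c) ≤ D (θ (X 1)) * degreeOf 1 F :=
            Nat.mul_le_mul_left _ hdF
          nlinarith
        have hD0' : D ((θ * ψ * δ) (X 0)) = D (θ (X 1)) * degreeOf 1 F := by
          rw [hT0, D_smul _ _ hα']
          exact (D_add_right (by rw [hsub.1]; omega)).1.trans hsub.1
        have hD1' : D ((θ * ψ * δ) (X 1)) = D (θ (X 1)) := by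
          rw [hT1, D_smul _ _ hβ']
        refine ⟨⟨γ' * γ, by rw [hT2, h2, ← mul_assoc, ← C_mul]⟩, ?_, ?_⟩
        · omega
        · rw [hD0', hD1', mul_comm (q + c) (D (θ (X 1)))]
          exact Nat.mul_le_mul_left _ hdF
  | @stepA θ ψ δ hθ hψ hδ ih =>
      simp only [cond] at ih ⊢
      obtain ⟨G, hGne, hGsupp, hG0, hG1, hG2⟩ := hψ
      obtain ⟨α', β', γ', hd0, hd1, hd2⟩ := hδ
      have hα' : α' ≠ 0 := diag_entry_ne δ hd0
      have hβ' : β' ≠ 0 := diag_entry_ne δ hd1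
      have hγ' : γ' ≠ 0 := diag_entry_ne δ hd2
      have hT0 : (θ * ψ * δ) (X 0) = C α' * θ (X 0) := by
        rw [AlgEquiv.mul_apply, hd0, eqv_C_mul, AlgEquiv.mul_apply, hG0]
      have hT1 : (θ * ψ * δ) (X 1) = C β' * (θ (X 1) + θ G) := by
        rw [AlgEquiv.mul_apply, hd1, eqv_C_mul, AlgEquiv.mul_apply, hG1, map_add]
      have hT2 : (θ * ψ * δ) (X 2) = C γ' * θ (X 2) := by
        rw [AlgEquiv.mul_apply, hd2, eqv_C_mul, AlgEquiv.mul_apply, hG2]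
      have hdG : 1 ≤ degreeOf 0 G := degOf_ge hGne 0 1 fun m hm => (hGsupp m hm).2
      rcases ih with hBS | hGB
      · obtain ⟨⟨α, f, hfsupp, h0⟩, ⟨β, h1⟩, ⟨γ, h2⟩⟩ := hBS
        have hα : α ≠ 0 := BS_alpha_ne hfsupp h0 h1 h2
        have hγ : γ ≠ 0 := diag_entry_ne θ h2
        right
        have hDθ0 : D (θ (X 0)) = 1 ∧ θ (X 0) ≠ 0 := by
          rw [h0, add_comm]
          have := D_add_right (f := f) (g := C α * X 0)
            (by rw [D_of_supp0 hfsupp, D_C_mul_X0 hα]; omega)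
          rwa [D_C_mul_X0 hα] at this
        have hsub := aeval_D 0 1 (Or.inl ⟨rfl, rfl⟩) (fun j => θ (X j)) γ hγ h2
          1 le_rfl hDθ0.1 hDθ0.2 G hGne (fun m hm => (hGsupp m hm).1)
        rw [← equiv_apply_eq_aeval] at hsub
        have hD1' : D ((θ * ψ * δ) (X 1)) = 1 * degreeOf 0 G := by
          rw [hT1, D_smul _ _ hβ']
          exact (D_add_right (by rw [hsub.1, h1, D_C_mul_X1]; omega)).1.trans hsub.1
        have hD0' : D ((θ * ψ * δ) (X 0)) = 1 := by
          rw [hT0, D_smul _ _ hα', hDθ0.1]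
        exact ⟨⟨γ' * γ, by rw [hT2, h2, ← mul_assoc, ← C_mul]⟩, by omega, by omega⟩
      · obtain ⟨⟨γ, h2⟩, h1n, hnm⟩ := hGB
        have hγ : γ ≠ 0 := diag_entry_ne θ h2
        right
        have hθ0ne : θ (X 0) ≠ 0 := emap_ne θ (X_ne_zero 0)
        have hm1 : 1 ≤ D (θ (X 0)) := by
          have : 1 * 1 ≤ (q + c) * D (θ (X 1)) := Nat.mul_le_mul (by omega) h1n
          omega
        have hsub := aeval_D 0 1 (Or.inl ⟨rfl, rfl⟩) (fun j => θ (X j)) γ hγ h2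
          (D (θ (X 0))) hm1 rfl hθ0ne G hGne (fun m hm => (hGsupp m hm).1)
        rw [← equiv_apply_eq_aeval] at hsub
        have hnm' : D (θ (X 1)) < D (θ (X 0)) := by
          have h3 : 3 ≤ q + c := by omega
          nlinarith [hnm, h1n, h3]
        have hbig : D (θ (X 1)) < D (θ (X 0)) * degreeOf 0 G := by
          have : D (θ (X 0)) * 1 ≤ D (θ (X 0)) * degreeOf 0 G := Nat.mul_le_mul_left _ hdG
          omega
        have hD1' : D ((θ * ψ * δ) (X 1)) = D (θ (X 0)) * degreeOf 0 G := by
          rw [hT1, D_smul _ _ hβ']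
          exact (D_add_right (by rw [hsub.1]; omega)).1.trans hsub.1
        have hD0' : D ((θ * ψ * δ) (X 0)) = D (θ (X 0)) := by
          rw [hT0, D_smul _ _ hα']
        refine ⟨⟨γ' * γ, by rw [hT2, h2, ← mul_assoc, ← C_mul]⟩, by omega, ?_⟩
        rw [hD0', hD1']
        have : D (θ (X 0)) * 1 ≤ D (θ (X 0)) * degreeOf 0 G := Nat.mul_le_mul_left _ hdG
        omega

end DegreeLemma


section Classification
variable {K : Type*} [Field K]
variable {a b c q t : ℕ}

lemma expo_key (hb : 0 < b) (hc : 0 < c) (ht : 1 ≤ t) (hA : a = b * q + c * t)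
    (hcop : Nat.Coprime b c) {m1 m2 : ℕ} (h : (m1 : ℤ) * b = a + m2 * c) :
    q + c ≤ m1 := by
  have hAZ : (a : ℤ) = b * q + c * t := by exact_mod_cast hA
  have h' : (b : ℤ) * ((m1 : ℤ) - q) = c * (t + m2) := by linarith
  have hpos : (0 : ℤ) < (m1 : ℤ) - q := by
    have h1 : (0 : ℤ) < c * (t + m2) := by positivity
    nlinarith [h1, h'.symm]
  have hco : IsCoprime (c : ℤ) (b : ℤ) := by
    rw [Int.isCoprime_iff_gcd_eq_one]
    simpa [Nat.gcd_comm] using hcop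
  have hdvd : (c : ℤ) ∣ (b : ℤ) * ((m1 : ℤ) - q) := ⟨(t + m2 : ℤ), h'⟩
  have hdvd2 : (c : ℤ) ∣ (m1 : ℤ) - q := hco.dvd_of_dvd_mul_left hdvd
  obtain ⟨k, hk⟩ := hdvd2
  have hkpos : 1 ≤ k := by nlinarith [hpos, hk]
  have : (q : ℤ) + c ≤ m1 := by nlinarith [hk, hkpos]
  exact_mod_cast this

lemma wt_vals : (![(a : ℤ), (b : ℤ), -(c : ℤ)] 0 = (a : ℤ)) ∧
    (![(a : ℤ), (b : ℤ), -(c : ℤ)] 1 = (b : ℤ)) ∧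
    (![(a : ℤ), (b : ℤ), -(c : ℤ)] 2 = -(c : ℤ)) := ⟨rfl, rfl, rfl⟩

lemma coeff_single_sum (cf : Fin 3 → K) (j : Fin 3) :
    coeff (Finsupp.single j 1) (∑ j' : Fin 3, C (cf j') * X j') = cf j := by
  rw [Fin.sum_univ_three]
  simp only [coeff_add, coeff_C_mul, coeff_X']
  fin_cases j <;>
    simp [Finsupp.single_eq_single_iff]

lemma class_linear (hb : 0 < b) (hc : 0 < c) (hq2 : 2 ≤ q) (ht : 1 ≤ t)
    (hA : a = b * q + c * t)
    {ψ : MvPolynomial (Fin 3) K ≃ₐ[K] MvPolynomial (Fin 3) K}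
    (hg : IsGraded ![(a : ℤ), (b : ℤ), -(c : ℤ)] ψ) (hl : IsLinearAut ψ) : DiagS ψ := by
  set w : Fin 3 → ℤ := ![(a : ℤ), (b : ℤ), -(c : ℤ)] with hw
  have ha : 0 < a := by nlinarith
  have hab : b < a := by nlinarith
  have hwinj : ∀ j v : Fin 3, w j = w v → j = v := by
    intro j v h
    fin_cases j <;> fin_cases v
    · rfl
    · exact absurd (show (a : ℤ) = (b : ℤ) from h) (by omega)
    · exact absurd (show (a : ℤ) = -(c : ℤ) from h) (by omega)
    · exact absurd (show (b : ℤ) = (a : ℤ) from h) (by omega)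
    · rfl
    · exact absurd (show (b : ℤ) = -(c : ℤ) from h) (by omega)
    · exact absurd (show -(c : ℤ) = (a : ℤ) from h) (by omega)
    · exact absurd (show -(c : ℤ) = (b : ℤ) from h) (by omega)
    · rfl
  have key : ∀ v : Fin 3, ∃ e : K, ψ (X v) = C e * X v := by
    intro v
    obtain ⟨cf, hcf⟩ := hl v
    have hhom := hg (w v) (X v) (isWeightedHomogeneous_X K w v)
    rw [hcf] at hhom
    have hz : ∀ j, j ≠ v → cf j = 0 := by
      intro j hj
      by_contra hne
      have hcoeff : coeff (Finsupp.single j 1) (∑ j' : Fin 3, C (cf j') * X j') = cf j :=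
        coeff_single_sum cf j
      have := hhom (hcoeff.symm ▸ hne)
      rw [weight_fin3] at this
      have hwj : (Finsupp.single j 1) 0 • w 0 + (Finsupp.single j 1) 1 • w 1 +
          (Finsupp.single j 1) 2 • w 2 = w j := by
        fin_cases j <;> simp [Finsupp.single_apply]
      rw [hwj] at this
      exact hj (hwinj j v this)
    refine ⟨cf v, ?_⟩
    rw [hcf, Fin.sum_univ_three]
    fin_cases v
    · rw [hz 1 (by decide), hz 2 (by decide)]; simp
    · rw [hz 0 (by decide), hz 2 (by decide)]; simp
    · rw [hz 0 (by decide), hz 1 (by decide)]; simp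
  obtain ⟨e0, h0⟩ := key 0
  obtain ⟨e1, h1⟩ := key 1
  obtain ⟨e2, h2⟩ := key 2
  exact ⟨e0, e1, e2, h0, h1, h2⟩

lemma class_elem (hb : 0 < b) (hc : 0 < c) (hq2 : 2 ≤ q) (ht : 1 ≤ t)
    (hA : a = b * q + c * t) (hcop : Nat.Coprime b c)
    {ψ : MvPolynomial (Fin 3) K ≃ₐ[K] MvPolynomial (Fin 3) K}
    (hg : IsGraded ![(a : ℤ), (b : ℤ), -(c : ℤ)] ψ) (he : IsElementary ψ) :
    EShape q c ψ ∨ FShape ψ ∨ ψ = 1 := by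
  set w : Fin 3 → ℤ := ![(a : ℤ), (b : ℤ), -(c : ℤ)] with hw
  obtain ⟨v, F, hvars, hψv, hψj⟩ := he
  have hFsupp' : ∀ m ∈ F.support, m v = 0 := by
    intro m hm
    by_contra h
    exact hvars ((mem_vars v).2 ⟨m, hm, Finsupp.mem_support_iff.2 h⟩)
  have hFhom : IsWeightedHomogeneous w F (w v) := by
    have h1 := hg (w v) (X v) (isWeightedHomogeneous_X K w v)
    rw [hψv] at h1
    have hFe : F = (X v + F) - X v := by ring
    rw [hFe]
    exact IsWH_sub h1 (isWeightedHomogeneous_X K w v)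
  have hwt : ∀ m ∈ F.support, Finsupp.weight w m = w v := fun m hm =>
    hFhom (mem_support_iff.1 hm)
  rcases eq_or_ne F 0 with rfl | hFne
  · right; right
    apply eqv_one
    intro j
    rcases eq_or_ne j v with rfl | hj
    · rw [hψv, add_zero]
    · exact hψj j hj
  · have hv3 : v = 0 ∨ v = 1 ∨ v = 2 := by
      fin_cases v
      exacts [Or.inl rfl, Or.inr (Or.inl rfl), Or.inr (Or.inr rfl)]
    rcases hv3 with rfl | rfl | rfl
    · left
      refine ⟨F, hFne, fun m hm => ⟨hFsupp' m hm, ?_⟩, hψv, hψj 1 (by decide),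
        hψj 2 (by decide)⟩
      have h1 := hwt m hm
      rw [weight_fin3, hFsupp' m hm] at h1
      simp only [zero_smul, zero_add, nsmul_eq_mul, hw] at h1
      have h1' : (m 1 : ℤ) * (b : ℤ) + (m 2 : ℤ) * (-(c : ℤ)) = (a : ℤ) := h1
      have h2 : (m 1 : ℤ) * b = a + (m 2 : ℤ) * c := by linarith
      exact expo_key hb hc ht hA hcop h2
    · right; left
      refine ⟨F, hFne, fun m hm => ⟨hFsupp' m hm, ?_⟩, hψj 0 (by decide), hψv,
        hψj 2 (by decide)⟩
      have h1 := hwt m hm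
      rw [weight_fin3, hFsupp' m hm] at h1
      simp only [zero_smul, add_zero, nsmul_eq_mul, hw] at h1
      have h1' : (m 0 : ℤ) * (a : ℤ) + (m 2 : ℤ) * (-(c : ℤ)) = (b : ℤ) := h1
      have h2 : (m 0 : ℤ) * a = b + (m 2 : ℤ) * c := by linarith
      by_contra hm0
      push_neg at hm0
      interval_cases hm00 : m 0
      · rw [show ((0:ℕ):ℤ) = 0 from rfl, zero_mul] at h2
        have : (0:ℤ) ≤ (m 2 : ℤ) * c := by positivity
        omega
    · exfalso
      obtain ⟨m, hm⟩ := MvPolynomial.support_nonempty.mpr hFne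
      have h1 := hwt m hm
      rw [weight_fin3, hFsupp' m hm] at h1
      simp only [zero_smul, add_zero, nsmul_eq_mul, hw] at h1
      have h2 : (m 0 : ℤ) * (a : ℤ) + (m 1 : ℤ) * (b : ℤ) = -(c : ℤ) := h1
      have h3 : (0:ℤ) ≤ (m 0 : ℤ) * a + (m 1 : ℤ) * b := by positivity
      omega

end Classification


section PhiFacts
variable {K : Type*} [Field K] (q t i t' : ℕ)

lemma Wp_facts : (Wp K q t ≠ 0) ∧ D (Wp K q t) = 1 := by
  have h1 : D (X 0 * X 2 ^ t : MvPolynomial (Fin 3) K) = 1 := by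
    rw [D_mul (X_ne_zero 0) (pow_ne_zero _ (X_ne_zero 2)), D_X0,
      D_pow (X_ne_zero 2), D_X2]
    ring
  have h2 : D ((X 1 : MvPolynomial (Fin 3) K) ^ q) = 0 := by
    rw [D_pow (X_ne_zero 1), D_X1]
    ring
  have h3 := D_add_left (f := (X 0 * X 2 ^ t : MvPolynomial (Fin 3) K)) (g := X 1 ^ q)
    (by omega)
  rw [Wp]
  exact ⟨h3.2, h3.1.trans h1⟩

lemma Up_facts : (Up K q t i t' ≠ 0) ∧ D (Up K q t i t') = i := by
  obtain ⟨hWne, hWD⟩ := Wp_facts (K := K) q t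
  constructor
  · exact mul_ne_zero (pow_ne_zero _ hWne) (pow_ne_zero _ (X_ne_zero 2))
  · rw [Up, D_mul (pow_ne_zero _ hWne) (pow_ne_zero _ (X_ne_zero 2)),
      D_pow hWne, D_pow (X_ne_zero 2), hWD, D_X2]
    ring

lemma D_phi1 (hi : 1 ≤ i) (htt' : t ≤ t') :
    D (phi K q t i t' htt' (X 1)) = i ∧ phi K q t i t' htt' (X 1) = X 1 + Up K q t i t' := by
  obtain ⟨hUne, hUD⟩ := Up_facts (K := K) q t i t'
  have he : phi K q t i t' htt' (X 1) = X 1 + Up K q t i t' := by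
    rw [phi_X1, C_1, one_mul]
  refine ⟨?_, he⟩
  rw [he]
  have := D_add_right (f := (X 1 : MvPolynomial (Fin 3) K)) (g := Up K q t i t')
    (by rw [D_X1, hUD]; omega)
  rw [this.1, hUD]

lemma D_phi0 [CharZero K] (hq2 : 2 ≤ q) (hi : 1 ≤ i) (htt' : t ≤ t') :
    D (phi K q t i t' htt' (X 0)) = i * q := by
  obtain ⟨hWne, hWD⟩ := Wp_facts (K := K) q t
  rw [phi_X0, FF, sub_eq_add_neg]
  set Fk : ℕ → MvPolynomial (Fin 3) K := fun k =>
    C ((1:K) ^ k * (q.choose k : K)) * (X 1 ^ (q - k) * (Wp K q t) ^ (i * k) *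
      X 2 ^ (t' * k - t)) with hFk
  have hterm : ∀ k ∈ Finset.Icc 1 q, Fk k ≠ 0 ∧ D (Fk k) = i * k := by
    intro k hk
    have hk2 := Finset.mem_Icc.1 hk
    have hCne : (C ((1:K) ^ k * (q.choose k : K)) : MvPolynomial (Fin 3) K) ≠ 0 := by
      rw [one_pow]
      simpa using (Nat.cast_ne_zero (R := K)).2 (Nat.choose_pos hk2.2).ne'
    have hfne : (X 1 : MvPolynomial (Fin 3) K) ^ (q - k) * (Wp K q t) ^ (i * k) *
        X 2 ^ (t' * k - t) ≠ 0 :=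
      mul_ne_zero (mul_ne_zero (pow_ne_zero _ (X_ne_zero 1)) (pow_ne_zero _ hWne))
        (pow_ne_zero _ (X_ne_zero 2))
    constructor
    · exact mul_ne_zero hCne hfne
    · rw [hFk]
      simp only
      rw [D_mul hCne hfne, D_C,
        D_mul (mul_ne_zero (pow_ne_zero _ (X_ne_zero 1)) (pow_ne_zero _ hWne))
          (pow_ne_zero _ (X_ne_zero 2)),
        D_mul (pow_ne_zero _ (X_ne_zero 1)) (pow_ne_zero _ hWne),
        D_pow (X_ne_zero 1), D_pow hWne, D_pow (X_ne_zero 2), D_X1, D_X2, hWD]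
      ring
  have hq1 : q ∈ Finset.Icc 1 q := Finset.mem_Icc.2 ⟨by omega, le_rfl⟩
  have hsum := D_sum (Finset.Icc 1 q) Fk q hq1 (hterm q hq1).1 (by
    intro k hk hkq
    rw [(hterm k hk).2, (hterm q hq1).2]
    have hk2 := Finset.mem_Icc.1 hk
    have : k < q := lt_of_le_of_ne hk2.2 hkq
    have hi0 : 0 < i := by omega
    exact Nat.mul_lt_mul_of_le_of_lt le_rfl this hi0)
  rw [(hterm q hq1).2] at hsum
  have hDS : D (-(∑ k ∈ Finset.Icc 1 q, Fk k)) = i * q := by rw [D_neg]; exact hsum.1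
  have hiq : 2 ≤ i * q := by nlinarith
  have := D_add_right (f := (X 0 : MvPolynomial (Fin 3) K))
    (g := -(∑ k ∈ Finset.Icc 1 q, Fk k)) (by rw [D_X0, hDS]; omega)
  rw [this.1, hDS]

end PhiFacts

section PhiGraded
variable {K : Type*} [Field K]
variable {a b c q t i t' : ℕ}

lemma IsWH_congr {w : Fin 3 → ℤ} {f : MvPolynomial (Fin 3) K} {d e : ℤ}
    (h : IsWeightedHomogeneous w f d) (hde : d = e) : IsWeightedHomogeneous w f e := hde ▸ h

lemma phi_graded (hA : a = b * q + c * t) (hB : b * q * i = b + c * t') (htt' : t ≤ t') :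
    IsGraded ![(a : ℤ), (b : ℤ), -(c : ℤ)] (phi K q t i t' htt') := by
  set w : Fin 3 → ℤ := ![(a : ℤ), (b : ℤ), -(c : ℤ)] with hw
  have hAZ : (a : ℤ) = b * q + c * t := by exact_mod_cast hA
  have hBZ : (b : ℤ) * q * i = b + c * t' := by exact_mod_cast hB
  have hX0 : IsWeightedHomogeneous w (X 0 : MvPolynomial (Fin 3) K) (a : ℤ) :=
    isWeightedHomogeneous_X K w 0
  have hX1 : IsWeightedHomogeneous w (X 1 : MvPolynomial (Fin 3) K) (b : ℤ) :=
    isWeightedHomogeneous_X K w 1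
  have hX2 : IsWeightedHomogeneous w (X 2 : MvPolynomial (Fin 3) K) (-(c : ℤ)) :=
    isWeightedHomogeneous_X K w 2
  have hWhom : IsWeightedHomogeneous w (Wp K q t) ((b : ℤ) * q) := by
    rw [Wp]
    refine IsWeightedHomogeneous.add (IsWH_congr (hX0.mul (IsWH_pow hX2 t)) ?_)
      (IsWH_congr (IsWH_pow hX1 q) ?_)
    · rw [nsmul_eq_mul]; linarith
    · rw [nsmul_eq_mul]; ring
  have hUhom : IsWeightedHomogeneous w (Up K q t i t') (b : ℤ) := by
    rw [Up]
    refine IsWH_congr ((IsWH_pow hWhom i).mul (IsWH_pow hX2 t')) ?_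
    rw [nsmul_eq_mul, nsmul_eq_mul]
    linarith
  have hFFhom : IsWeightedHomogeneous w (FF K q t i t' 1) (a : ℤ) := by
    rw [FF]
    apply IsWH_sub hX0
    apply IsWeightedHomogeneous.sum
    intro k hk
    have hk2 := Finset.mem_Icc.1 hk
    have hkq : (↑(q - k) : ℤ) = (q : ℤ) - k := by
      rw [Nat.cast_sub hk2.2]
    have htk : (↑(t' * k - t) : ℤ) = (t' : ℤ) * k - t := by
      rw [Nat.cast_sub (le_trans htt' (Nat.le_mul_of_pos_right t' (by omega)))]
      push_cast
      ring
    refine IsWH_congr ((isWeightedHomogeneous_C w _).mul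
      (((IsWH_pow hX1 (q - k)).mul (IsWH_pow hWhom (i * k))).mul
        (IsWH_pow hX2 (t' * k - t)))) ?_
    rw [nsmul_eq_mul, nsmul_eq_mul, nsmul_eq_mul, hkq, htk]
    push_cast
    nlinarith [hAZ, hBZ, mul_le_mul_of_nonneg_left hBZ.le (by positivity : (0:ℤ) ≤ (k:ℤ))]
  intro d f hf
  have happ : phi K q t i t' htt' f = aeval ![FF K q t i t' 1, X 1 + Up K q t i t', X 2] f :=
    rfl
  rw [happ]
  apply hom_aeval _ _ hf
  intro j
  fin_cases j
  · exact hFFhom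
  · exact IsWeightedHomogeneous.add hX1 hUhom
  · exact hX2

end PhiGraded

section Assemble
variable {K : Type*} [Field K]
variable {a b c q t : ℕ}

lemma tame_NF (hb : 0 < b) (hc : 0 < c) (hq2 : 2 ≤ q) (ht : 1 ≤ t)
    (hA : a = b * q + c * t) (hcop : Nat.Coprime b c)
    (l : List (MvPolynomial (Fin 3) K ≃ₐ[K] MvPolynomial (Fin 3) K))
    (hl : ∀ ψ ∈ l, IsGraded ![(a : ℤ), (b : ℤ), -(c : ℤ)] ψ ∧
      (IsElementary ψ ∨ IsLinearAut ψ)) :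
    ∃ s, NF q c l.prod s := by
  induction l using List.reverseRecOn with
  | nil =>
      rw [List.prod_nil]
      exact ⟨true, NF.baseA AS_one⟩
  | append_singleton l ψ ih =>
      rw [List.prod_append, List.prod_cons, List.prod_nil, mul_one]
      obtain ⟨s, hs⟩ := ih (fun ψ' h => hl ψ' (List.mem_append_left _ h))
      have hψ := hl ψ (List.mem_append_right _ (by simp))
      rcases hψ.2 with he | hlin
      · rcases class_elem hb hc hq2 ht hA hcop hψ.1 he with hE | hF | h1
        · exact NF_mul_E hs hE
        · exact NF_mul_F hs hF
        · rw [h1, mul_one]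
          exact ⟨s, hs⟩
      · exact ⟨s, NF_mul_diag hs (class_linear hb hc hq2 ht hA hψ.1 hlin)⟩

end Assemble

end GradedWild

open GradedWild in
set_option maxHeartbeats 1000000 in
theorem exists_graded_wild_automorphism_of_qhat_ge_two'
    {K : Type*} [Field K] [CharZero K]
    (a b c : ℕ) (ha : 0 < a) (hb : 0 < b) (hc : 0 < c) (hab : b ≤ a)
    (hac : Nat.gcd a c = 1) (hbc : Nat.gcd b c = 1)
    (qhat : ℤ)
    (hqhat : IsGreatest {q : ℤ | (b : ℤ) * q ≡ (a : ℤ) [ZMOD (c : ℤ)] ∧ (b : ℤ) * q < (a : ℤ)} qhat)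
    (hq2 : 2 ≤ qhat) :
    ∃ φ : MvPolynomial (Fin 3) K ≃ₐ[K] MvPolynomial (Fin 3) K,
      IsGraded ![(a : ℤ), (b : ℤ), -(c : ℤ)] φ ∧
      ¬ IsGradedTame ![(a : ℤ), (b : ℤ), -(c : ℤ)] φ := by
  obtain ⟨⟨hmod, hlt⟩, -⟩ := hqhat
  have hq0 : 0 ≤ qhat := by omega
  set q : ℕ := qhat.toNat with hqdef
  have hqz : (q : ℤ) = qhat := Int.toNat_of_nonneg hq0
  have hq2' : 2 ≤ q := by omega
  have hbqa : b * q < a := by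
    have h1 : (b : ℤ) * q < a := by rw [hqz]; exact hlt
    exact_mod_cast h1
  have hdvdZ : (c : ℤ) ∣ (a : ℤ) - b * q := by
    have h1 := Int.ModEq.dvd hmod
    rw [← hqz] at h1
    exact h1
  have hdvdN : c ∣ a - b * q := by
    have h1 : ((a - b * q : ℕ) : ℤ) = (a : ℤ) - b * q := by
      push_cast [Nat.cast_sub hbqa.le]
      ring
    exact Int.natCast_dvd_natCast.1 (h1 ▸ hdvdZ)
  obtain ⟨t, ht⟩ := hdvdN
  have hA : a = b * q + c * t := by omega
  have ht1 : 1 ≤ t := by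
    rcases Nat.eq_zero_or_pos t with rfl | h
    · rw [Nat.mul_zero] at ht
      have h2 : a ≤ b * q := Nat.sub_eq_zero_iff_le.1 ht
      omega
    · exact h
  have hcopbc : Nat.Coprime b c := hbc
  have hcopqc : Nat.Coprime q c := by
    have hd : Nat.gcd q c ∣ 1 := by
      rw [← hac]
      apply Nat.dvd_gcd
      · rw [hA]
        exact Nat.dvd_add (Dvd.dvd.mul_left (Nat.gcd_dvd_left q c) b)
          (Dvd.dvd.mul_right (Nat.gcd_dvd_right q c) t)
      · exact Nat.gcd_dvd_right q c
    exact Nat.dvd_one.1 hd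
  obtain ⟨i, t', hi1, hB, htt'⟩ : ∃ i t', 1 ≤ i ∧ b * q * i = b + c * t' ∧ t ≤ t' := by
    obtain ⟨i₀, hi₀1, hi₀⟩ : ∃ i₀, 1 ≤ i₀ ∧ c ∣ q * i₀ - 1 := by
      rcases Nat.lt_or_ge 1 c with h | h
      · obtain ⟨i₀, -, hi₀⟩ := Nat.exists_mul_mod_eq_one_of_coprime hcopqc h
        have hi₀1 : 1 ≤ i₀ := by
          rcases Nat.eq_zero_or_pos i₀ with rfl | h' 
          · rw [Nat.mul_zero, Nat.zero_mod] at hi₀; omega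
          · exact h'
        refine ⟨i₀, hi₀1, ?_⟩
        have h1 : 1 ≤ q * i₀ := by nlinarith
        have h2 : q * i₀ % c = 1 % c := by rw [hi₀, Nat.mod_eq_of_lt h]
        exact (Nat.modEq_iff_dvd' h1).1 (Nat.ModEq.symm h2)
      · have hc1 : c = 1 := by omega
        exact ⟨1, le_rfl, by simp [hc1]⟩
    set i := i₀ + c * t with hidef
    have hA1 : 1 ≤ q * i₀ := by nlinarith
    have hqi : q * i = q * i₀ + q * (c * t) := by rw [hidef, Nat.mul_add]
    have hdvd2 : c ∣ q * i - 1 := by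
      have heq : q * i - 1 = (q * i₀ - 1) + q * (c * t) := by omega
      rw [heq]
      exact Nat.dvd_add hi₀ (Dvd.dvd.mul_left (Dvd.intro t rfl) q)
    obtain ⟨k, hk⟩ := hdvd2
    have hqi1 : q * i = 1 + c * k := by
      have h1 : 1 ≤ q * i := by nlinarith
      omega
    have hkt : t ≤ k := by
      have h1 : c * t ≤ q * (c * t) := Nat.le_mul_of_pos_left _ (by omega)
      have h2 : c * t ≤ c * k := by omega
      exact Nat.le_of_mul_le_mul_left h2 hc
    refine ⟨i, b * k, by omega, ?_, le_trans hkt (Nat.le_mul_of_pos_left _ hb)⟩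
    rw [mul_assoc, hqi1]
    ring
  refine ⟨phi K q t i t' htt', ?_, ?_⟩
  · exact phi_graded hA hB htt'
  rintro ⟨l, hl, hprod⟩
  obtain ⟨s, hs⟩ := tame_NF hb hc hq2' ht1 hA hcopbc l hl
  rw [← hprod] at hs
  have hdeg := NF_deg hq2' hc hs
  have hD0 := D_phi0 (K := K) q t i t' hq2' hi1 htt'
  have hD1 := (D_phi1 (K := K) q t i t' hi1 htt').1
  have hiq2 : 2 ≤ i * q := by nlinarith
  cases s
  · simp only [cond] at hdeg
    rcases hdeg with hBS | hGB
    · obtain ⟨-, ⟨β, h1⟩, -⟩ := hBS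
      rw [h1, D_C_mul_X1] at hD1
      omega
    · obtain ⟨-, h1n, hnm⟩ := hGB
      rw [hD0, hD1] at hnm
      nlinarith
  · simp only [cond] at hdeg
    rcases hdeg with hAS | hGA
    · obtain ⟨⟨α, h0⟩, -, -⟩ := hAS
      rw [h0] at hD0
      rcases eq_or_ne α 0 with rfl | hα
      · rw [C_0, zero_mul, D_zero] at hD0
        omega
      · rw [D_C_mul_X0 hα] at hD0
        omega
    · obtain ⟨-, h1m, hmn⟩ := hGA
      rw [hD0, hD1] at hmn
      nlinarith



/-- Let `a ≥ b > 0`, `c > 0` with `gcd(a,c) = gcd(b,c) = 1`, let `Γ` be the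
`ℤ`-grading of `K[x,y,z]` with `deg x = a`, `deg y = b`, `deg z = -c`, and let
`q̂ = max {q ∈ ℤ : bq ≡ a (mod c), bq < a}`. If `q̂ ≥ 2`, then there exists a
`Γ`-graded automorphism of `K[x,y,z]` which is graded-wild. -/
theorem exists_graded_wild_automorphism_of_qhat_ge_two
    {K : Type*} [Field K] [IsAlgClosed K] [CharZero K]
    (a b c : ℕ) (ha : 0 < a) (hb : 0 < b) (hc : 0 < c) (hab : b ≤ a)
    (hac : Nat.gcd a c = 1) (hbc : Nat.gcd b c = 1)
    (qhat : ℤ)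
    (hqhat : IsGreatest {q : ℤ | (b : ℤ) * q ≡ (a : ℤ) [ZMOD (c : ℤ)] ∧ (b : ℤ) * q < (a : ℤ)} qhat)
    (hq2 : 2 ≤ qhat) :
    ∃ φ : MvPolynomial (Fin 3) K ≃ₐ[K] MvPolynomial (Fin 3) K,
      IsGraded ![(a : ℤ), (b : ℤ), -(c : ℤ)] φ ∧
      ¬ IsGradedTame ![(a : ℤ), (b : ℤ), -(c : ℤ)] φ :=
  exists_graded_wild_automorphism_of_qhat_ge_two' a b c ha hb hc hab hac hbc qhat hqhat hq2
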